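/- arXiv:2009.08865 — 5 statements merged into one kernel-verified Lean document; each statement's English description precedes it below -/
import Mathlib

section
/- For any w in S_n, the set Perm_n(D_o(w)) of permutations with the same odd diagram as w has a unique minimum element with respect to Bruhat order: there exists u with D_o(u) = D_o(w) such that u ≤ z in Bruhat order for all z with D_o(z) = D_o(w). -/
def oddDiagram {n : ℕ} (w : Equiv.Perm (Fin n)) : Finset (Fin n × Fin n) :=
  Finset.univ.filter (fun p => (p.2 : ℕ) < (w p.1 : ℕ) ∧ (p.1 : ℕ) < (w.symm p.2 : ℕ) ∧
    (p.1 : ℕ) % 2 ≠ (w.symm p.2 : ℕ) % 2)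

def invLength {n : ℕ} (w : Equiv.Perm (Fin n)) : ℕ :=
  (Finset.univ.filter (fun p : Fin n × Fin n => p.1 < p.2 ∧ w p.2 < w p.1)).card

def bruhatLE {n : ℕ} : Equiv.Perm (Fin n) → Equiv.Perm (Fin n) → Prop :=
  Relation.ReflTransGen (fun u v => ∃ t : Equiv.Perm (Fin n), t.IsSwap ∧ v = u * t ∧ invLength u < invLength v)

def contains213 {n : ℕ} (w : Equiv.Perm (Fin n)) : Prop :=
  ∃ i h j : Fin n, i < h ∧ h < j ∧ w h < w i ∧ w i < w j

def contains312 {n : ℕ} (w : Equiv.Perm (Fin n)) : Prop :=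
  ∃ i h j : Fin n, i < h ∧ h < j ∧ w h < w j ∧ w j < w i

lemma mem_oddDiagram {n : ℕ} (w : Equiv.Perm (Fin n)) (x : Fin n × Fin n) :
    x ∈ oddDiagram w ↔ ((x.2 : ℕ) < (w x.1 : ℕ) ∧ (x.1 : ℕ) < (w.symm x.2 : ℕ) ∧
      (x.1 : ℕ) % 2 ≠ ((w.symm x.2 : ℕ)) % 2) := by
  simp [oddDiagram]

lemma swap_ioo_iff {n : ℕ} (p j y : Fin n) (hpj : p < j) :
    (p < Equiv.swap p j y ∧ Equiv.swap p j y < j) ↔ (p < y ∧ y < j) := by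
  rcases eq_or_ne y p with rfl | hyp
  · rw [Equiv.swap_apply_left]
    simp [hpj, lt_irrefl]
  · rcases eq_or_ne y j with rfl | hyj
    · rw [Equiv.swap_apply_right]
      simp [hpj, lt_irrefl]
    · rw [Equiv.swap_apply_of_ne_of_ne hyp hyj]

lemma invLength_mul_swap_lt {n : ℕ} (z : Equiv.Perm (Fin n)) (p j : Fin n)
    (hpj : p < j) (hv : z j < z p) :
    invLength (z * Equiv.swap p j) < invLength z := by
  classical
  set s := Equiv.swap p j with hs
  have hsp : s p = j := Equiv.swap_apply_left p j
  have hsj : s j = p := Equiv.swap_apply_right p j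
  have hso : ∀ y, y ≠ p → y ≠ j → s y = y := fun y h1 h2 => Equiv.swap_apply_of_ne_of_ne h1 h2
  set Φ : Fin n × Fin n → Fin n × Fin n :=
    fun x => if (p < x.1 ∧ x.1 < j) ∨ (p < x.2 ∧ x.2 < j) then x else (s x.1, s x.2) with hΦ
  have hΦinv : Function.Involutive Φ := by
    intro x
    by_cases hcond : (p < x.1 ∧ x.1 < j) ∨ (p < x.2 ∧ x.2 < j)
    · simp only [hΦ, if_pos hcond, if_pos hcond]
    · have hcond2 : ¬ ((p < s x.1 ∧ s x.1 < j) ∨ (p < s x.2 ∧ s x.2 < j)) := by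
        rw [hs, swap_ioo_iff p j x.1 hpj, swap_ioo_iff p j x.2 hpj]
        exact hcond
      simp only [hΦ, if_neg hcond, if_neg hcond2, hs, Equiv.swap_apply_self]
      rw [if_neg (by rw [hs] at hcond2; exact hcond2)]
  set Inv₁ := Finset.univ.filter
      (fun x : Fin n × Fin n => x.1 < x.2 ∧ (z * s) x.2 < (z * s) x.1) with hInv₁
  set Inv := Finset.univ.filter (fun x : Fin n × Fin n => x.1 < x.2 ∧ z x.2 < z x.1) with hInv
  have hpjInv : (p, j) ∈ Inv := by
    simp only [hInv, Finset.mem_filter, Finset.mem_univ, true_and]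
    exact ⟨hpj, hv⟩
  have hmaps : ∀ x ∈ Inv₁, Φ x ∈ Inv \ {(p, j)} := by
    rintro ⟨x₁, x₂⟩ hx
    simp only [hInv₁, Finset.mem_filter, Finset.mem_univ, true_and] at hx
    obtain ⟨hx12, hxinv⟩ := hx
    simp only [Equiv.Perm.mul_apply] at hxinv
    simp only [Finset.mem_sdiff, Finset.mem_singleton, hInv, Finset.mem_filter,
      Finset.mem_univ, true_and]
    by_cases hcond : (p < x₁ ∧ x₁ < j) ∨ (p < x₂ ∧ x₂ < j)
    · simp only [hΦ, if_pos hcond]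
      rcases eq_or_ne p x₁ with rfl | h1p
      · have hx2 : p < x₂ ∧ x₂ < j := by
          rcases hcond with h | h
          · exact absurd h.1 (lt_irrefl p)
          · exact h
        have hx2p : x₂ ≠ p := ne_of_gt hx2.1
        have hx2j : x₂ ≠ j := ne_of_lt hx2.2
        rw [hsp, hso x₂ hx2p hx2j] at hxinv
        refine ⟨⟨hx12, lt_trans hxinv hv⟩, ?_⟩
        intro hc; exact hx2j (by simpa using congrArg Prod.snd hc)
      · rcases eq_or_ne j x₂ with rfl | h2j
        · have hx1 : p < x₁ ∧ x₁ < j := by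
            rcases hcond with h | h
            · exact h
            · exact absurd h.2 (lt_irrefl j)
          have hx1j : x₁ ≠ j := ne_of_lt hx1.2
          rw [hsj, hso x₁ (Ne.symm h1p) hx1j] at hxinv
          refine ⟨⟨hx12, lt_trans hv hxinv⟩, ?_⟩
          intro hc; exact h1p (by simpa using (congrArg Prod.fst hc).symm)
        · have hx1j : x₁ ≠ j := by
            intro he
            subst he
            rcases hcond with h | h
            · exact absurd h.2 (lt_irrefl x₁)
            · exact absurd (lt_trans hx12 h.2) (lt_irrefl x₁)
          have hx2p : x₂ ≠ p := by
            intro he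
            subst he
            rcases hcond with h | h
            · exact absurd (lt_trans h.1 hx12) (lt_irrefl x₂)
            · exact absurd h.1 (lt_irrefl x₂)
          rw [hso x₁ (Ne.symm h1p) hx1j, hso x₂ hx2p (Ne.symm h2j)] at hxinv
          exact ⟨⟨hx12, hxinv⟩, fun hc => h1p (by simpa using (congrArg Prod.fst hc).symm)⟩
    · simp only [hΦ, if_neg hcond]
      push_neg at hcond
      obtain ⟨hc1, hc2⟩ := hcond
      rcases eq_or_ne p x₁ with rfl | h1p
      · rcases eq_or_ne j x₂ with rfl | h2j
        · rw [hsp, hsj] at hxinv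
          exact absurd hxinv (not_lt.mpr hv.le)
        · have hx2j : j < x₂ := lt_of_le_of_ne (hc2 hx12) h2j
          have hx2p : x₂ ≠ p := ne_of_gt hx12
          rw [hsp, hso x₂ hx2p (Ne.symm h2j)] at hxinv
          rw [hsp, hso x₂ hx2p (Ne.symm h2j)]
          refine ⟨⟨hx2j, hxinv⟩, ?_⟩
          intro hc; exact (ne_of_gt hx2j) (by simpa using congrArg Prod.snd hc)
      · rcases eq_or_ne p x₂ with rfl | h2p
        · have hx1j : x₁ ≠ j := ne_of_lt (lt_trans hx12 hpj)
          rw [hsp, hso x₁ (Ne.symm h1p) hx1j] at hxinv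
          rw [hsp, hso x₁ (Ne.symm h1p) hx1j]
          refine ⟨⟨lt_trans hx12 hpj, hxinv⟩, ?_⟩
          intro hc; exact h1p (by simpa using (congrArg Prod.fst hc).symm)
        · rcases eq_or_ne j x₁ with rfl | h1j
          · have hx2j : x₂ ≠ j := ne_of_gt hx12
            rw [hsj, hso x₂ (Ne.symm h2p) hx2j] at hxinv
            rw [hsj, hso x₂ (Ne.symm h2p) hx2j]
            refine ⟨⟨lt_trans hpj hx12, hxinv⟩, ?_⟩
            intro hc; exact hx2j (by simpa using congrArg Prod.snd hc)
          · rcases eq_or_ne j x₂ with rfl | h2j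
            · have hx1p : x₁ < p := by
                rcases lt_or_ge x₁ p with h | h
                · exact h
                · exact absurd hx12 (not_lt.mpr (hc1 (lt_of_le_of_ne h h1p)))
              rw [hsj, hso x₁ (Ne.symm h1p) (Ne.symm h1j)] at hxinv
              rw [hsj, hso x₁ (Ne.symm h1p) (Ne.symm h1j)]
              refine ⟨⟨hx1p, hxinv⟩, ?_⟩
              intro hc; exact h1p (by simpa using (congrArg Prod.fst hc).symm)
            · rw [hso x₁ (Ne.symm h1p) (Ne.symm h1j), hso x₂ (Ne.symm h2p) (Ne.symm h2j)]
                at hxinv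
              rw [hso x₁ (Ne.symm h1p) (Ne.symm h1j), hso x₂ (Ne.symm h2p) (Ne.symm h2j)]
              exact ⟨⟨hx12, hxinv⟩, fun hc => h1p (by simpa using (congrArg Prod.fst hc).symm)⟩
  have hinj : Set.InjOn Φ ↑Inv₁ := (hΦinv.injective).injOn
  have hcard : Inv₁.card ≤ (Inv \ {(p, j)}).card :=
    Finset.card_le_card_of_injOn Φ hmaps hinj
  have hlt2 : (Inv \ {(p, j)}).card < Inv.card := by
    apply Finset.card_lt_card
    apply Finset.sdiff_ssubset
    · simpa using hpjInv
    · simp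
  calc invLength (z * s) = Inv₁.card := rfl
    _ ≤ (Inv \ {(p, j)}).card := hcard
    _ < Inv.card := hlt2

lemma oddDiagram_mul_swap {n : ℕ} (z : Equiv.Perm (Fin n)) (p j : Fin n)
    (hpj : (p : ℕ) < (j : ℕ))
    (hpar : (j : ℕ) % 2 = (p : ℕ) % 2) (hab : (z j : ℕ) < (z p : ℕ))
    (hC : ∀ q : Fin n, (p : ℕ) < (q : ℕ) → (q : ℕ) % 2 ≠ (p : ℕ) % 2 →
      ((z q : ℕ) < (z j : ℕ) ∨ (z p : ℕ) < (z q : ℕ)))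
    (hD : ∀ q : Fin n, (p : ℕ) < (q : ℕ) → (q : ℕ) < (j : ℕ) →
      (q : ℕ) % 2 ≠ (p : ℕ) % 2 → (z q : ℕ) < (z j : ℕ)) :
    oddDiagram (z * Equiv.swap p j) = oddDiagram z := by
  have hpjF : p ≠ j := Fin.ne_of_val_ne (Nat.ne_of_lt hpj)
  set s := Equiv.swap p j with hs
  have hsp : s p = j := Equiv.swap_apply_left p j
  have hsj : s j = p := Equiv.swap_apply_right p j
  have hso : ∀ y : Fin n, y ≠ p → y ≠ j → s y = y :=
    fun y h1 h2 => Equiv.swap_apply_of_ne_of_ne h1 h2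
  have hsymm1 : ∀ v, (z * s).symm v = s (z.symm v) := by
    intro v
    rw [Equiv.symm_apply_eq]
    simp [hs, Equiv.Perm.mul_apply, Equiv.swap_apply_self]
  ext ⟨r, v⟩
  obtain ⟨q, rfl⟩ : ∃ q, v = z q := ⟨z.symm v, (z.apply_symm_apply v).symm⟩
  rw [mem_oddDiagram, mem_oddDiagram]
  simp only [hsymm1, Equiv.symm_apply_apply, Equiv.Perm.mul_apply]
  rcases eq_or_ne p q with rfl | hqp
  · rw [hsp]
    rcases eq_or_ne p r with rfl | hrp
    · rw [hsp]
      constructor <;> rintro ⟨h1, h2, h3⟩ <;> omega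
    · rcases eq_or_ne j r with rfl | hrj
      · rw [hsj]
        constructor <;> rintro ⟨h1, h2, h3⟩ <;> omega
      · rw [hso r (Ne.symm hrp) (Ne.symm hrj)]
        constructor
        · rintro ⟨h1, h2, h3⟩
          refine ⟨h1, ?_, by omega⟩
          rcases Nat.lt_trichotomy (r : ℕ) (p : ℕ) with h | h | h
          · exact h
          · exact absurd (Fin.ext h).symm hrp
          · have := hD r h h2 (by omega)
            omega
        · rintro ⟨h1, h2, h3⟩
          exact ⟨h1, by omega, by omega⟩
  · rcases eq_or_ne j q with rfl | hqj
    · rw [hsj]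
      rcases eq_or_ne p r with rfl | hrp
      · rw [hsp]
        constructor <;> rintro ⟨h1, h2, h3⟩ <;> omega
      · rcases eq_or_ne j r with rfl | hrj
        · rw [hsj]
          constructor <;> rintro ⟨h1, h2, h3⟩ <;> omega
        · rw [hso r (Ne.symm hrp) (Ne.symm hrj)]
          constructor
          · rintro ⟨h1, h2, h3⟩
            exact ⟨h1, by omega, by omega⟩
          · rintro ⟨h1, h2, h3⟩
            refine ⟨h1, ?_, by omega⟩
            rcases Nat.lt_trichotomy (r : ℕ) (p : ℕ) with h | h | h
            · exact h
            · exact absurd (Fin.ext h).symm hrp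
            · have := hD r h h2 (by omega)
              omega
    · rw [hso q (Ne.symm hqp) (Ne.symm hqj)]
      rcases eq_or_ne p r with rfl | hrp
      · rw [hsp]
        constructor
        · rintro ⟨h1, h2, h3⟩
          exact ⟨by omega, h2, h3⟩
        · rintro ⟨h1, h2, h3⟩
          rcases hC q h2 (by omega) with h | h
          · exact ⟨h, h2, h3⟩
          · omega
      · rcases eq_or_ne j r with rfl | hrj
        · rw [hsj]
          constructor
          · rintro ⟨h1, h2, h3⟩
            rcases hC q (by omega) (by omega) with h | h
            · exact ⟨h, h2, h3⟩
            · omega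
          · rintro ⟨h1, h2, h3⟩
            exact ⟨by omega, h2, h3⟩
        · rw [hso r (Ne.symm hrp) (Ne.symm hrj)]

lemma key_move {n : ℕ} (z z' : Equiv.Perm (Fin n)) (h : oddDiagram z = oddDiagram z')
    (p : Fin n) (hpre : ∀ k, k < p → z k = z' k) (hlt : (z' p : ℕ) < (z p : ℕ)) :
    ∃ z₁ : Equiv.Perm (Fin n), oddDiagram z₁ = oddDiagram z ∧
      invLength z₁ < invLength z ∧ bruhatLE z₁ z := by
  have htr : ∀ r v : Fin n,
      ((v : ℕ) < (z r : ℕ) ∧ (r : ℕ) < (z.symm v : ℕ) ∧ (r : ℕ) % 2 ≠ (z.symm v : ℕ) % 2) ↔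
      ((v : ℕ) < (z' r : ℕ) ∧ (r : ℕ) < (z'.symm v : ℕ) ∧ (r : ℕ) % 2 ≠ (z'.symm v : ℕ) % 2) := by
    intro r v
    rw [← mem_oddDiagram z (r, v), ← mem_oddDiagram z' (r, v), h]
  set a := z' p with ha
  set j := z.symm a with hj
  have hzj : z j = a := z.apply_symm_apply a
  have hz'a : z'.symm a = p := z'.symm_apply_apply p
  -- Step A : p < j
  have hA : (p : ℕ) < (j : ℕ) := by
    rcases Nat.lt_trichotomy (j : ℕ) (p : ℕ) with hh | hh | hh
    · exfalso
      have hjp : j < p := hh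
      have h1 : z' j = a := (hpre j hjp).symm.trans hzj
      have h2 : j = p := by
        have := congrArg z'.symm h1
        rwa [Equiv.symm_apply_apply, hz'a] at this
      rw [h2] at hh; omega
    · exfalso
      have h2 : j = p := Fin.ext hh
      rw [h2] at hzj
      rw [hzj] at hlt
      omega
    · exact hh
  -- Step B : parity of j equals parity of p
  have hB : (j : ℕ) % 2 = (p : ℕ) % 2 := by
    by_contra hne
    have := ((htr p a).mp ⟨hlt, hA, by omega⟩).2.1
    rw [hz'a] at this
    omega
  -- Step C
  have hCa : ∀ q : Fin n, (p : ℕ) < (q : ℕ) → (q : ℕ) % 2 ≠ (p : ℕ) % 2 →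
      ((z q : ℕ) < (a : ℕ) ∨ (z p : ℕ) < (z q : ℕ)) := by
    intro q h1 h2
    rcases Nat.lt_trichotomy ((z q : ℕ)) ((z p : ℕ)) with hh | hh | hh
    · left
      have := ((htr p (z q)).mp ⟨hh, by rw [Equiv.symm_apply_apply]; exact h1,
        by rw [Equiv.symm_apply_apply]; omega⟩).1
      exact this
    · exact absurd (congrArg Fin.val (z.injective (Fin.ext hh))) (by omega)
    · right; exact hh
  -- Step D
  have hDa : ∀ q : Fin n, (p : ℕ) < (q : ℕ) → (q : ℕ) < (j : ℕ) →
      (q : ℕ) % 2 ≠ (p : ℕ) % 2 → (z q : ℕ) < (a : ℕ) := by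
    intro q h1 h2 h3
    rcases hCa q h1 h3 with hh | hh
    · exact hh
    · exfalso
      have := ((htr q a).mp ⟨by omega, h2, by omega⟩).2.1
      rw [hz'a] at this
      omega
  have hzjv : (z j : ℕ) = (a : ℕ) := congrArg Fin.val hzj
  have hC' : ∀ q : Fin n, (p : ℕ) < (q : ℕ) → (q : ℕ) % 2 ≠ (p : ℕ) % 2 →
      ((z q : ℕ) < (z j : ℕ) ∨ (z p : ℕ) < (z q : ℕ)) := by
    intro q h1 h2
    rcases hCa q h1 h2 with hh | hh
    · left; omega
    · right; exact hh
  have hD' : ∀ q : Fin n, (p : ℕ) < (q : ℕ) → (q : ℕ) < (j : ℕ) →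
      (q : ℕ) % 2 ≠ (p : ℕ) % 2 → (z q : ℕ) < (z j : ℕ) := by
    intro q h1 h2 h3
    have := hDa q h1 h2 h3
    omega
  have hab : (z j : ℕ) < (z p : ℕ) := by omega
  have hpjF : p < j := by
    rw [Fin.lt_def]; exact hA
  have hvF : z j < z p := by
    rw [Fin.lt_def]; exact hab
  have hlen := invLength_mul_swap_lt z p j hpjF hvF
  refine ⟨z * Equiv.swap p j, oddDiagram_mul_swap z p j hA hB hab hC' hD', hlen, ?_⟩
  refine Relation.ReflTransGen.single ⟨Equiv.swap p j, ⟨p, j, ne_of_lt hpjF, rfl⟩, ?_, hlen⟩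
  rw [mul_assoc, Equiv.swap_mul_self, mul_one]

theorem stmt12 {n : ℕ} (w : Equiv.Perm (Fin n)) :
    ∃ u : Equiv.Perm (Fin n), oddDiagram u = oddDiagram w ∧
      ∀ z : Equiv.Perm (Fin n), oddDiagram z = oddDiagram w → bruhatLE u z := by
  classical
  set C := Finset.univ.filter (fun z : Equiv.Perm (Fin n) => oddDiagram z = oddDiagram w)
    with hC
  have hwC : w ∈ C := by simp [hC]
  obtain ⟨u, huC, hu⟩ := Finset.exists_min_image C invLength ⟨w, hwC⟩
  have huD : oddDiagram u = oddDiagram w := by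
    simpa [hC] using huC
  refine ⟨u, huD, ?_⟩
  have main : ∀ m : ℕ, ∀ z : Equiv.Perm (Fin n),
      invLength z = m → oddDiagram z = oddDiagram w → bruhatLE u z := by
    intro m
    induction m using Nat.strong_induction_on with
    | _ m ih =>
      intro z hm hz
      by_cases hzu : z = u
      · subst hzu; exact Relation.ReflTransGen.refl
      · have hne : ∃ k, z k ≠ u k := by
          by_contra hno
          push_neg at hno
          exact hzu (Equiv.ext hno)
        have hFne : (Finset.univ.filter (fun k : Fin n => z k ≠ u k)).Nonempty := by
          obtain ⟨k, hk⟩ := hne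
          exact ⟨k, by simp [hk]⟩
        set F := Finset.univ.filter (fun k : Fin n => z k ≠ u k) with hF
        set p := F.min' hFne with hp
        have hpF : p ∈ F := F.min'_mem hFne
        have hpzu : z p ≠ u p := by
          simpa [hF] using hpF
        have hpre : ∀ k, k < p → z k = u k := by
          intro k hk
          by_contra hkk
          have hkF : k ∈ F := by simp [hF, hkk]
          exact absurd (F.min'_le k hkF) (not_le.mpr hk)
        rcases Nat.lt_trichotomy ((z p : ℕ)) ((u p : ℕ)) with hlt | heq | hgt
        · exfalso
          obtain ⟨u₁, hD1, hlen1, -⟩ := key_move u z (huD.trans hz.symm) p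
            (fun k hk => (hpre k hk).symm) hlt
          have hu1C : u₁ ∈ C := by simp [hC, hD1.trans huD]
          have := hu u₁ hu1C
          omega
        · exact absurd (z.injective.eq_iff.mpr rfl ▸ Fin.ext heq) hpzu
        · obtain ⟨z₁, hD1, hlen1, hstep⟩ := key_move z u (hz.trans huD.symm) p hpre hgt
          have hrec := ih (invLength z₁) (by omega) z₁ rfl (hD1.trans hz)
          exact hrec.trans hstep
  exact fun z hz => main (invLength z) z rfl hz
end

section
/- Let D be an odd diagram arising from some permutation in S_n, and let v be the Bruhat-maximal element of Perm_n(D) = {z : D_o(z) = D}. If w in Perm_n(D) and w ≠ v, then there exists a transposition t such that D_o(wt) = D and wt covers w in Bruhat order (ℓ(wt) = ℓ(w) + 1). -/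
namespace OddAux
variable {n : ℕ}

lemma mem_odd (w : Equiv.Perm (Fin n)) (p : Fin n × Fin n) :
    p ∈ oddDiagram w ↔ ((p.2:ℕ) < (w p.1:ℕ) ∧ (p.1:ℕ) < (w.symm p.2:ℕ) ∧
      (p.1:ℕ) % 2 ≠ (w.symm p.2:ℕ) % 2) := by
  simp [oddDiagram]

lemma cellIff {w z : Equiv.Perm (Fin n)} (h : oddDiagram w = oddDiagram z) (q m : Fin n) :
    ((m:ℕ) < (w q:ℕ) ∧ (q:ℕ) < (w.symm m:ℕ) ∧ (q:ℕ) % 2 ≠ (w.symm m:ℕ) % 2) ↔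
    ((m:ℕ) < (z q:ℕ) ∧ (q:ℕ) < (z.symm m:ℕ) ∧ (q:ℕ) % 2 ≠ (z.symm m:ℕ) % 2) := by
  have := Finset.ext_iff.mp h (q, m)
  simpa [oddDiagram] using this

lemma swap_val_mod {a b : Fin n} (h : (a:ℕ) % 2 = (b:ℕ) % 2) (x : Fin n) :
    ((Equiv.swap a b x : Fin n):ℕ) % 2 = (x:ℕ) % 2 := by
  rcases eq_or_ne x a with rfl | hxa
  · rw [Equiv.swap_apply_left]; omega
  rcases eq_or_ne x b with rfl | hxb
  · rw [Equiv.swap_apply_right]; omega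
  · rw [Equiv.swap_apply_of_ne_of_ne hxa hxb]

lemma mul_swap_symm_apply (w : Equiv.Perm (Fin n)) (a b m : Fin n) :
    (w * Equiv.swap a b).symm m = Equiv.swap a b (w.symm m) := by
  have h : (w * Equiv.swap a b) (Equiv.swap a b (w.symm m)) = m := by
    simp [Equiv.Perm.mul_apply]
  exact (Equiv.symm_apply_eq _).mpr h.symm

def goodPair (w : Equiv.Perm (Fin n)) (a b : Fin n) : Prop :=
  (a:ℕ) < (b:ℕ) ∧ (a:ℕ) % 2 = (b:ℕ) % 2 ∧ ((w a):ℕ) < ((w b):ℕ) ∧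
  ∀ q : Fin n, (a:ℕ) < (q:ℕ) → (q:ℕ) % 2 ≠ (a:ℕ) % 2 →
    ((w q):ℕ) < ((w a):ℕ) ∨ ((b:ℕ) < (q:ℕ) ∧ ((w b):ℕ) < ((w q):ℕ))

lemma diag_swap (w : Equiv.Perm (Fin n)) {a b : Fin n} (hg : goodPair w a b) :
    oddDiagram (w * Equiv.swap a b) = oddDiagram w := by
  obtain ⟨hab, hpar, hv, key⟩ := hg
  ext ⟨i, m⟩
  rw [mem_odd, mem_odd]
  simp only [Equiv.Perm.mul_apply, mul_swap_symm_apply]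
  set pm := w.symm m with hpm
  have hm : (m:ℕ) = ((w pm : Fin n):ℕ) := by rw [hpm, Equiv.apply_symm_apply]
  rw [hm, swap_val_mod hpar pm]
  rcases eq_or_ne i a with hEa | hia
  · rw [hEa, Equiv.swap_apply_left]
    rcases eq_or_ne pm a with hPa | hpa
    · rw [hPa, Equiv.swap_apply_left]
      omega
    rcases eq_or_ne pm b with hPb | hpb
    · rw [hPb, Equiv.swap_apply_right]
      omega
    · rw [Equiv.swap_apply_of_ne_of_ne hpa hpb]
      by_cases hq : (a:ℕ) < (pm:ℕ) ∧ (pm:ℕ) % 2 ≠ (a:ℕ) % 2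
      · have hk := key pm hq.1 hq.2
        omega
      · omega
  rcases eq_or_ne i b with hEb | hib
  · rw [hEb, Equiv.swap_apply_right]
    rcases eq_or_ne pm a with hPa | hpa
    · rw [hPa, Equiv.swap_apply_left]
      omega
    rcases eq_or_ne pm b with hPb | hpb
    · rw [hPb, Equiv.swap_apply_right]
      omega
    · rw [Equiv.swap_apply_of_ne_of_ne hpa hpb]
      by_cases hq : (a:ℕ) < (pm:ℕ) ∧ (pm:ℕ) % 2 ≠ (a:ℕ) % 2
      · have hk := key pm hq.1 hq.2
        omega
      · omega
  · rw [Equiv.swap_apply_of_ne_of_ne hia hib]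
    rcases eq_or_ne pm a with hPa | hpa
    · rw [hPa, Equiv.swap_apply_left]
      have h1 : (i:ℕ) ≠ (a:ℕ) := fun h => hia (Fin.val_injective h)
      by_cases hq : (a:ℕ) < (i:ℕ) ∧ (i:ℕ) % 2 ≠ (a:ℕ) % 2
      · have hk := key i hq.1 hq.2
        omega
      · omega
    rcases eq_or_ne pm b with hPb | hpb
    · rw [hPb, Equiv.swap_apply_right]
      have h1 : (i:ℕ) ≠ (b:ℕ) := fun h => hib (Fin.val_injective h)
      have h2 : (i:ℕ) ≠ (a:ℕ) := fun h => hia (Fin.val_injective h)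
      by_cases hq : (a:ℕ) < (i:ℕ) ∧ (i:ℕ) % 2 ≠ (a:ℕ) % 2
      · have hk := key i hq.1 hq.2
        omega
      · omega
    · rw [Equiv.swap_apply_of_ne_of_ne hpa hpb]


lemma invLength_swap (w : Equiv.Perm (Fin n)) (a b : Fin n)
    (hab : (a:ℕ) < (b:ℕ)) (hv : ((w a):ℕ) < ((w b):ℕ))
    (hmid : ∀ i : Fin n, (a:ℕ) < (i:ℕ) → (i:ℕ) < (b:ℕ) →
      ((w i):ℕ) < ((w a):ℕ) ∨ ((w b):ℕ) < ((w i):ℕ)) :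
    invLength (w * Equiv.swap a b) = invLength w + 1 := by
  classical
  set s := Equiv.swap a b with hs
  have hsa : s a = b := Equiv.swap_apply_left a b
  have hsb : s b = a := Equiv.swap_apply_right a b
  have hsfix : ∀ x : Fin n, x ≠ a → x ≠ b → s x = x :=
    fun x h1 h2 => Equiv.swap_apply_of_ne_of_ne h1 h2
  have hss : ∀ x, s (s x) = x := fun x => Equiv.swap_apply_self a b x
  set μ : Fin n × Fin n → Fin n × Fin n :=
    fun p => if (s p.1 : Fin n) < s p.2 then (s p.1, s p.2) else p with hμ
  have habF : (a, b) ∈ Finset.univ.filter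
      (fun p : Fin n × Fin n => p.1 < p.2 ∧ (w * s) p.2 < (w * s) p.1) := by
    simp only [Finset.mem_filter, Finset.mem_univ, true_and]
    constructor
    · rw [Fin.lt_def]; exact hab
    · rw [Fin.lt_def]; simp only [Equiv.Perm.mul_apply]; rw [hsa, hsb]; exact hv
  have hstat : ∀ p : Fin n × Fin n, p ≠ (a, b) → p.1 < p.2 →
      ((μ p).1 < (μ p).2 ∧ μ p ≠ (a, b) ∧
        ((w * s) p.2 < (w * s) p.1 ↔ w (μ p).2 < w (μ p).1)) := by
    intro p hp hlt
    by_cases h : (s p.1 : Fin n) < s p.2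
    · simp only [hμ, if_pos h]
      refine ⟨h, ?_, by simp [Equiv.Perm.mul_apply]⟩
      intro hcon
      rw [Prod.ext_iff] at hcon
      obtain ⟨h1, h2⟩ := hcon
      have h1' : s p.1 = a := h1
      have h2' : s p.2 = b := h2
      have e1 : p.1 = b := by rw [← hss p.1, h1']; exact hsa
      have e2 : p.2 = a := by rw [← hss p.2, h2']; exact hsb
      rw [e1, e2, Fin.lt_def] at hlt; omega
    · have hne12 : p.1 ≠ p.2 := ne_of_lt hlt
      have h' : (s p.2 : Fin n) < s p.1 := by
        rcases lt_or_eq_of_le (not_lt.mp h) with h2 | h2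
        · exact h2
        · exact absurd (s.injective h2) hne12.symm
      simp only [hμ, if_neg h]
      refine ⟨hlt, hp, ?_⟩
      simp only [Equiv.Perm.mul_apply]
      by_cases h1a : p.1 = a
      · have h2a : p.2 ≠ a := fun hc => hne12 (h1a.trans hc.symm)
        have h2b : p.2 ≠ b := fun hc => hp (Prod.ext_iff.mpr ⟨h1a, hc⟩)
        have hfix : s p.2 = p.2 := hsfix _ h2a h2b
        rw [h1a, hsa, hfix]
        have hr1 : (a:ℕ) < ((p.2):ℕ) := by
          rw [h1a, Fin.lt_def] at hlt; exact hlt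
        have hr2 : ((p.2):ℕ) < (b:ℕ) := by
          rw [hfix, h1a, hsa, Fin.lt_def] at h'; exact h'
        have hm := hmid p.2 hr1 hr2
        simp only [Fin.lt_def]
        omega
      · by_cases h2b : p.2 = b
        · have h1b : p.1 ≠ b := fun hc => hne12 (hc.trans h2b.symm)
          have hfix : s p.1 = p.1 := hsfix _ h1a h1b
          rw [h2b, hsb, hfix]
          have hr1 : (a:ℕ) < ((p.1):ℕ) := by
            rw [h2b, hsb, hfix, Fin.lt_def] at h'; exact h'
          have hr2 : ((p.1):ℕ) < (b:ℕ) := by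
            rw [h2b, Fin.lt_def] at hlt; exact hlt
          have hm := hmid p.1 hr1 hr2
          simp only [Fin.lt_def]
          omega
        · exfalso
          by_cases h1b : p.1 = b
          · have h2a : p.2 ≠ a := by
              intro hc; rw [h1b, hc, Fin.lt_def] at hlt; omega
            have hfix2 : s p.2 = p.2 := hsfix _ h2a h2b
            rw [h1b, hsb, hfix2] at h'
            rw [h1b, Fin.lt_def] at hlt
            rw [Fin.lt_def] at h'; omega
          · by_cases h2a : p.2 = a
            · have hfix1 : s p.1 = p.1 := hsfix _ h1a h1b
              rw [h2a, hsa, hfix1] at h'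
              rw [h2a, Fin.lt_def] at hlt
              rw [Fin.lt_def] at h'; omega
            · rw [hsfix _ h1a h1b, hsfix _ h2a h2b] at h'
              exact absurd hlt (not_lt.mpr (le_of_lt h'))
  have hμμ : ∀ p : Fin n × Fin n, p.1 < p.2 → μ (μ p) = p := by
    intro p hlt
    by_cases h : (s p.1 : Fin n) < s p.2
    · simp only [hμ, if_pos h, hss]
      rw [if_pos hlt]
    · simp only [hμ, if_neg h]
  have hcard : ((Finset.univ.filter
        (fun p : Fin n × Fin n => p.1 < p.2 ∧ (w * s) p.2 < (w * s) p.1)).erase (a, b)).card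
      = (Finset.univ.filter (fun p : Fin n × Fin n => p.1 < p.2 ∧ w p.2 < w p.1)).card := by
    apply Finset.card_bij' (fun p _ => μ p) (fun q _ => μ q)
    · intro p hp
      rw [Finset.mem_erase] at hp
      obtain ⟨hpne, hpmem⟩ := hp
      simp only [Finset.mem_filter, Finset.mem_univ, true_and] at hpmem ⊢
      obtain ⟨hlt, hinv⟩ := hpmem
      obtain ⟨ho, hne', hiff⟩ := hstat p hpne hlt
      exact ⟨ho, hiff.mp hinv⟩
    · intro q hq
      simp only [Finset.mem_filter, Finset.mem_univ, true_and] at hq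
      obtain ⟨hlt, hinv⟩ := hq
      have hqne : q ≠ (a, b) := by
        intro hc; rw [hc] at hinv
        have h2 : ((w b):ℕ) < ((w a):ℕ) := hinv
        omega
      obtain ⟨ho, hne', hiff⟩ := hstat q hqne hlt
      obtain ⟨ho2, hne2, hiff2⟩ := hstat (μ q) hne' ho
      rw [Finset.mem_erase]
      refine ⟨hne', ?_⟩
      simp only [Finset.mem_filter, Finset.mem_univ, true_and]
      refine ⟨ho, ?_⟩
      rw [hμμ q hlt] at hiff2
      exact hiff2.mpr hinv
    · intro p hp
      rw [Finset.mem_erase] at hp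
      obtain ⟨hpne, hpmem⟩ := hp
      simp only [Finset.mem_filter, Finset.mem_univ, true_and] at hpmem
      exact hμμ p hpmem.1
    · intro q hq
      simp only [Finset.mem_filter, Finset.mem_univ, true_and] at hq
      exact hμμ q hq.1
  have hfin := Finset.card_erase_add_one habF
  show (Finset.univ.filter
      (fun p : Fin n × Fin n => p.1 < p.2 ∧ (w * s) p.2 < (w * s) p.1)).card
      = (Finset.univ.filter (fun p : Fin n × Fin n => p.1 < p.2 ∧ w p.2 < w p.1)).card + 1
  omega


lemma refineCover : ∀ (N : ℕ) (w : Equiv.Perm (Fin n)) (a b : Fin n), (b:ℕ) ≤ N →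
    goodPair w a b →
    ∃ b' : Fin n, goodPair w a b' ∧ ∀ i : Fin n, (a:ℕ) < (i:ℕ) → (i:ℕ) < (b':ℕ) →
      ((w i):ℕ) < ((w a):ℕ) ∨ ((w b'):ℕ) < ((w i):ℕ) := by
  intro N
  induction N with
  | zero =>
    intro w a b hb hg
    exact absurd hg.1 (by omega)
  | succ N ih =>
    intro w a b hb hg
    obtain ⟨hab, hpar, hv, key⟩ := hg
    by_cases hmid : ∃ i : Fin n, (a:ℕ) < (i:ℕ) ∧ (i:ℕ) < (b:ℕ) ∧
        ((w a):ℕ) < ((w i):ℕ) ∧ ((w i):ℕ) < ((w b):ℕ)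
    · obtain ⟨i, h1, h2, h3, h4⟩ := hmid
      have hpi : (i:ℕ) % 2 = (a:ℕ) % 2 := by
        by_contra hnp
        rcases key i h1 hnp with hk | ⟨hk1, hk2⟩ <;> omega
      have hkey' : ∀ q : Fin n, (a:ℕ) < (q:ℕ) → (q:ℕ) % 2 ≠ (a:ℕ) % 2 →
          ((w q):ℕ) < ((w a):ℕ) ∨ ((i:ℕ) < (q:ℕ) ∧ ((w i):ℕ) < ((w q):ℕ)) := by
        intro q hq hqp
        rcases key q hq hqp with hk | ⟨hk1, hk2⟩
        · exact Or.inl hk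
        · exact Or.inr ⟨by omega, by omega⟩
      exact ih w a i (by omega) ⟨h1, by omega, h3, hkey'⟩
    · refine ⟨b, ⟨hab, hpar, hv, key⟩, ?_⟩
      intro i h1 h2
      have hia : i ≠ a := fun h => by rw [h] at h1; omega
      have hib : i ≠ b := fun h => by rw [h] at h2; omega
      have hva : ((w i):ℕ) ≠ ((w a):ℕ) := fun h => hia (w.injective (Fin.val_injective h))
      have hvb : ((w i):ℕ) ≠ ((w b):ℕ) := fun h => hib (w.injective (Fin.val_injective h))
      by_contra hcon
      push_neg at hcon
      exact hmid ⟨i, h1, h2, by omega, by omega⟩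

lemma downStep (w z : Equiv.Perm (Fin n)) (hD : oddDiagram w = oddDiagram z) (a : Fin n)
    (hagree : ∀ i : Fin n, (i:ℕ) < (a:ℕ) → w i = z i) (hlt : ((w a):ℕ) < ((z a):ℕ)) :
    ∃ c : Fin n, z c = w a ∧ goodPair (z * Equiv.swap a c) a c ∧
      oddDiagram (z * Equiv.swap a c) = oddDiagram z := by
  set c := z.symm (w a) with hc
  have hzc : z c = w a := z.apply_symm_apply _
  have hzcv : ((z c):ℕ) = ((w a):ℕ) := congrArg Fin.val hzc
  have hca : c ≠ a := by
    intro h; rw [h] at hzcv; omega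
  have hac : (a:ℕ) < (c:ℕ) := by
    rcases Nat.lt_trichotomy (c:ℕ) (a:ℕ) with h | h | h
    · exfalso
      have h1 : w c = w a := by rw [hagree c h]; exact hzc
      exact hca (w.injective h1)
    · exact absurd (Fin.val_injective h) hca
    · exact h
  have hpar : (a:ℕ) % 2 = (c:ℕ) % 2 := by
    have hcell := cellIff hD a (w a)
    rw [Equiv.symm_apply_apply, ← hc] at hcell
    by_contra hp
    have := (hcell.mpr ⟨hlt, hac, by omega⟩).1
    omega
  have hz'a : (z * Equiv.swap a c) a = z c := by
    rw [Equiv.Perm.mul_apply, Equiv.swap_apply_left]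
  have hz'c : (z * Equiv.swap a c) c = z a := by
    rw [Equiv.Perm.mul_apply, Equiv.swap_apply_right]
  have hz'q : ∀ q : Fin n, q ≠ a → q ≠ c → (z * Equiv.swap a c) q = z q := by
    intro q h1 h2
    rw [Equiv.Perm.mul_apply, Equiv.swap_apply_of_ne_of_ne h1 h2]
  have hgp : goodPair (z * Equiv.swap a c) a c := by
    refine ⟨hac, hpar, ?_, ?_⟩
    · rw [hz'a, hz'c, hzc]; omega
    · intro q hq hqp
      have hqa : q ≠ a := fun h => by rw [h] at hq; omega
      have hqc : q ≠ c := by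
        intro h; rw [h] at hqp; exact hqp hpar.symm
      rw [hz'a, hz'c, hz'q q hqa hqc, hzcv]
      have hne1 : ((z q):ℕ) ≠ ((w a):ℕ) := by
        intro h
        have : z q = z c := by rw [hzc]; exact Fin.val_injective h
        exact hqc (z.injective this)
      have hne2 : ((z q):ℕ) ≠ ((z a):ℕ) := fun h => hqa (z.injective (Fin.val_injective h))
      rcases Nat.lt_trichotomy ((z q):ℕ) ((w a):ℕ) with h | h | h
      · exact Or.inl h
      · exact absurd h hne1
      · rcases Nat.lt_trichotomy ((z q):ℕ) ((z a):ℕ) with h2 | h2 | h2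
        · exfalso
          have hcell := cellIff hD a (z q)
          rw [Equiv.symm_apply_apply] at hcell
          have := (hcell.mpr ⟨h2, hq, by omega⟩).1
          omega
        · exact absurd h2 hne2
        · refine Or.inr ⟨?_, by omega⟩
          by_contra hcq
          have hqcv : (q:ℕ) ≠ (c:ℕ) := fun h => hqc (Fin.val_injective h)
          have hqc' : (q:ℕ) < (c:ℕ) := by omega
          have hcell := cellIff hD q (w a)
          rw [Equiv.symm_apply_apply, ← hc] at hcell
          have := (hcell.mpr ⟨by omega, hqc', by omega⟩).2.1
          omega
  refine ⟨c, hzc, hgp, ?_⟩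
  have h2 := diag_swap (z * Equiv.swap a c) hgp
  rw [mul_assoc, Equiv.swap_mul_self, mul_one] at h2
  exact h2.symm

lemma firstDiff (w z : Equiv.Perm (Fin n)) (h : w ≠ z) :
    ∃ a : Fin n, w a ≠ z a ∧ ∀ i : Fin n, (i:ℕ) < (a:ℕ) → w i = z i := by
  classical
  have hex : ∃ i, w i ≠ z i := by
    by_contra hc; push_neg at hc; exact h (Equiv.ext hc)
  set S := Finset.univ.filter (fun i => w i ≠ z i) with hS
  have hSne : S.Nonempty := by
    obtain ⟨i, hi⟩ := hex; exact ⟨i, by simp [hS, hi]⟩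
  refine ⟨S.min' hSne, ?_, ?_⟩
  · have := S.min'_mem hSne
    simpa [hS] using this
  · intro i hi
    by_contra hc
    have hle : S.min' hSne ≤ i := S.min'_le i (by simp [hS, hc])
    rw [Fin.le_def] at hle
    omega

lemma parityInv : ∀ (N : ℕ) (w z : Equiv.Perm (Fin n)),
    (Finset.univ.filter (fun i => w i ≠ z i)).card ≤ N → oddDiagram w = oddDiagram z →
    ∀ m : Fin n, ((w.symm m):ℕ) % 2 = ((z.symm m):ℕ) % 2 := by
  intro N
  induction N with
  | zero =>
    intro w z hc hD m
    have hwz : w = z := by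
      apply Equiv.ext; intro i; by_contra hne
      have h1 : (Finset.univ.filter (fun i => w i ≠ z i)).Nonempty := ⟨i, by simp [hne]⟩
      have := Finset.card_pos.mpr h1
      omega
    rw [hwz]
  | succ N ih =>
    intro w z hc hD m
    by_cases hwz : w = z
    · rw [hwz]
    obtain ⟨a, hane, hagree⟩ := firstDiff w z hwz
    have haM : a ∈ Finset.univ.filter (fun i => w i ≠ z i) := by simp [hane]
    have hvne : ((w a):ℕ) ≠ ((z a):ℕ) := fun h => hane (Fin.val_injective h)
    have hcpos := Finset.card_pos.mpr ⟨a, haM⟩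
    have hcerase := Finset.card_erase_of_mem haM
    rcases Nat.lt_trichotomy ((w a):ℕ) ((z a):ℕ) with hlt | he | hgt
    · obtain ⟨c, hzc, hgp, hDz'⟩ := downStep w z hD a hagree hlt
      obtain ⟨hac, hpc, -, -⟩ := hgp
      have hsub : (Finset.univ.filter (fun i => w i ≠ (z * Equiv.swap a c) i)) ⊆
          (Finset.univ.filter (fun i => w i ≠ z i)).erase a := by
        intro i hi
        simp only [Finset.mem_filter, Finset.mem_univ, true_and] at hi
        rw [Finset.mem_erase]
        simp only [Finset.mem_filter, Finset.mem_univ, true_and]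
        rcases eq_or_ne i a with rfl | hia
        · exfalso
          apply hi
          rw [Equiv.Perm.mul_apply, Equiv.swap_apply_left, hzc]
        · refine ⟨hia, ?_⟩
          rcases eq_or_ne i c with rfl | hic
          · intro hcc
            rw [hzc] at hcc
            have := w.injective hcc
            rw [this] at hac; omega
          · intro hcc
            apply hi
            rw [Equiv.Perm.mul_apply, Equiv.swap_apply_of_ne_of_ne hia hic]
            exact hcc
      have hcard : (Finset.univ.filter (fun i => w i ≠ (z * Equiv.swap a c) i)).card ≤ N := by
        have h1 := Finset.card_le_card hsub
        omega
      have hp' := ih w (z * Equiv.swap a c) hcard (hD.trans hDz'.symm) m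
      rw [hp', mul_swap_symm_apply]
      exact swap_val_mod hpc _
    · exact absurd he hvne
    · obtain ⟨c, hwc, hgp, hDw'⟩ := downStep z w hD.symm a (fun i hi => (hagree i hi).symm) hgt
      obtain ⟨hac, hpc, -, -⟩ := hgp
      have hsub : (Finset.univ.filter (fun i => (w * Equiv.swap a c) i ≠ z i)) ⊆
          (Finset.univ.filter (fun i => w i ≠ z i)).erase a := by
        intro i hi
        simp only [Finset.mem_filter, Finset.mem_univ, true_and] at hi
        rw [Finset.mem_erase]
        simp only [Finset.mem_filter, Finset.mem_univ, true_and]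
        rcases eq_or_ne i a with rfl | hia
        · exfalso
          apply hi
          rw [Equiv.Perm.mul_apply, Equiv.swap_apply_left, hwc]
        · refine ⟨hia, ?_⟩
          rcases eq_or_ne i c with rfl | hic
          · intro hcc
            rw [hwc] at hcc
            have := z.injective hcc
            rw [this] at hac; omega
          · intro hcc
            apply hi
            rw [Equiv.Perm.mul_apply, Equiv.swap_apply_of_ne_of_ne hia hic]
            exact hcc
      have hcard : (Finset.univ.filter (fun i => (w * Equiv.swap a c) i ≠ z i)).card ≤ N := by
        have h1 := Finset.card_le_card hsub
        omega
      have hp' := ih (w * Equiv.swap a c) z hcard (hDw'.trans hD) m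
      rw [← hp', mul_swap_symm_apply]
      exact (swap_val_mod hpc _).symm

lemma upStep (w z : Equiv.Perm (Fin n)) (hD : oddDiagram w = oddDiagram z)
    (hpar : ∀ m : Fin n, ((w.symm m):ℕ) % 2 = ((z.symm m):ℕ) % 2) (a : Fin n)
    (hagree : ∀ i : Fin n, (i:ℕ) < (a:ℕ) → w i = z i) (hlt : ((w a):ℕ) < ((z a):ℕ)) :
    ∃ b : Fin n, goodPair w a b := by
  set b := w.symm (z a) with hbdef
  have hwb : w b = z a := w.apply_symm_apply _
  have hwbv : ((w b):ℕ) = ((z a):ℕ) := congrArg Fin.val hwb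
  have hba : b ≠ a := by
    intro h; rw [h] at hwbv; omega
  have hab : (a:ℕ) < (b:ℕ) := by
    rcases Nat.lt_trichotomy (b:ℕ) (a:ℕ) with h | h | h
    · exfalso
      have h1 : z b = z a := by rw [← hagree b h]; exact hwb
      exact hba (z.injective h1)
    · exact absurd (Fin.val_injective h) hba
    · exact h
  have hparb : (a:ℕ) % 2 = (b:ℕ) % 2 := by
    have h1 := hpar (z a)
    rw [Equiv.symm_apply_apply, ← hbdef] at h1
    exact h1.symm
  refine ⟨b, hab, hparb, by omega, ?_⟩
  intro q hq hqp
  have hqa : q ≠ a := fun h => by rw [h] at hq; omega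
  have hqb : q ≠ b := by
    intro h; apply hqp; rw [h]; omega
  have hne1 : ((w q):ℕ) ≠ ((w a):ℕ) := fun h => hqa (w.injective (Fin.val_injective h))
  have hne2 : ((w q):ℕ) ≠ ((w b):ℕ) := fun h => hqb (w.injective (Fin.val_injective h))
  rcases Nat.lt_trichotomy ((w q):ℕ) ((w a):ℕ) with h | h | h
  · exact Or.inl h
  · exact absurd h hne1
  · rcases Nat.lt_trichotomy ((w q):ℕ) ((z a):ℕ) with h2 | h2 | h2
    · exfalso
      set e := z.symm (w q) with hedef
      have hze : z e = w q := z.apply_symm_apply _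
      have hzev : ((z e):ℕ) = ((w q):ℕ) := congrArg Fin.val hze
      have hea : e ≠ a := by
        intro hh; rw [hh] at hzev; omega
      have hae : (a:ℕ) < (e:ℕ) := by
        rcases Nat.lt_trichotomy (e:ℕ) (a:ℕ) with hh | hh | hh
        · exfalso
          have h3 : w e = w q := by rw [hagree e hh]; exact hze
          have h4 := w.injective h3
          rw [h4] at hh; omega
        · exact absurd (Fin.val_injective hh) hea
        · exact hh
      have hpe := hpar (w q)
      rw [Equiv.symm_apply_apply, ← hedef] at hpe
      have hcell := cellIff hD a (w q)
      rw [Equiv.symm_apply_apply, ← hedef] at hcell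
      have := (hcell.mpr ⟨h2, hae, by omega⟩).1
      omega
    · exact absurd (by omega : ((w q):ℕ) = ((w b):ℕ)) hne2
    · refine Or.inr ⟨?_, by omega⟩
      by_contra hbq
      have hqbv : (q:ℕ) ≠ (b:ℕ) := fun hh => hqb (Fin.val_injective hh)
      have hqb' : (q:ℕ) < (b:ℕ) := by omega
      have hcell := cellIff hD q (z a)
      rw [Equiv.symm_apply_apply, ← hbdef] at hcell
      have := (hcell.mp ⟨h2, hqb', by omega⟩).2.1
      omega

lemma bruhatLE_invLength {x y : Equiv.Perm (Fin n)} (h : bruhatLE x y) :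
    invLength x ≤ invLength y := by
  induction h with
  | refl => exact le_rfl
  | tail h1 h2 ih =>
    obtain ⟨t, -, -, hlt⟩ := h2
    omega


end OddAux

theorem stmt14 {n : ℕ} (v : Equiv.Perm (Fin n))
    (hmax : ∀ z : Equiv.Perm (Fin n), oddDiagram z = oddDiagram v → bruhatLE z v)
    (w : Equiv.Perm (Fin n)) (hw : oddDiagram w = oddDiagram v) (hne : w ≠ v) :
    ∃ t : Equiv.Perm (Fin n), t.IsSwap ∧ oddDiagram (w * t) = oddDiagram w ∧
      invLength (w * t) = invLength w + 1 := by
  classical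
  obtain ⟨a, hane, hagree⟩ := OddAux.firstDiff w v hne
  have hvne : ((w a):ℕ) ≠ ((v a):ℕ) := fun h => hane (Fin.val_injective h)
  have hpar := OddAux.parityInv (Finset.univ.filter (fun i => w i ≠ v i)).card w v le_rfl hw
  rcases Nat.lt_trichotomy ((w a):ℕ) ((v a):ℕ) with hlt | he | hgt
  · obtain ⟨b, hgp⟩ := OddAux.upStep w v hw hpar a hagree hlt
    obtain ⟨b', hgp', hcov⟩ := OddAux.refineCover (b:ℕ) w a b le_rfl hgp
    have hab := hgp'.1
    have hv2 := hgp'.2.2.1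
    refine ⟨Equiv.swap a b', ⟨a, b', fun h => by rw [h] at hab; omega, rfl⟩,
      OddAux.diag_swap w hgp', OddAux.invLength_swap w a b' hab hv2 hcov⟩
  · exact absurd he hvne
  · exfalso
    obtain ⟨b, hgp⟩ := OddAux.upStep v w hw.symm (fun m => (hpar m).symm) a
      (fun i hi => (hagree i hi).symm) hgt
    obtain ⟨b', hgp', hcov⟩ := OddAux.refineCover (b:ℕ) v a b le_rfl hgp
    have hab := hgp'.1
    have hv2 := hgp'.2.2.1
    have hD2 : oddDiagram (v * Equiv.swap a b') = oddDiagram v := OddAux.diag_swap v hgp'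
    have hlen : invLength (v * Equiv.swap a b') = invLength v + 1 :=
      OddAux.invLength_swap v a b' hab hv2 hcov
    have hble := hmax _ hD2
    have := OddAux.bruhatLE_invLength hble
    omega
end

section
/- Let D be an odd diagram and suppose x ◁ y ◁ z is a saturated chain in Bruhat order with x, y, z all having odd diagram D. Then every element of the Bruhat interval [x, z] has odd diagram D. -/
def bruhatLT {n : ℕ} : Equiv.Perm (Fin n) → Equiv.Perm (Fin n) → Prop :=
  Relation.TransGen (fun u v => ∃ t : Equiv.Perm (Fin n), t.IsSwap ∧ v = u * t ∧ invLength u < invLength v)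

def bruhatCov {n : ℕ} (u v : Equiv.Perm (Fin n)) : Prop :=
  bruhatLT u v ∧ invLength v = invLength u + 1

namespace Odd15

variable {n : ℕ}

def Inv (w : Equiv.Perm (Fin n)) : Finset (Fin n × Fin n) :=
  Finset.univ.filter (fun p : Fin n × Fin n => p.1 < p.2 ∧ w p.2 < w p.1)

lemma invLength_eq_card (w : Equiv.Perm (Fin n)) : invLength w = (Inv w).card := rfl

lemma mem_Inv {w : Equiv.Perm (Fin n)} {p : Fin n × Fin n} :
    p ∈ Inv w ↔ p.1 < p.2 ∧ w p.2 < w p.1 := by simp [Inv]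

lemma vne (w : Equiv.Perm (Fin n)) {k l : Fin n} (h : k ≠ l) : ((w k : ℕ)) ≠ (w l : ℕ) := by
  intro hh; exact h (w.injective (Fin.val_injective hh))

lemma pne {k l : Fin n} (h : k ≠ l) : (k : ℕ) ≠ (l : ℕ) := fun hh => h (Fin.val_injective hh)

lemma master (w : Equiv.Perm (Fin n)) (e f : Fin n) :
    invLength (w * Equiv.swap e f) + 2 * ((Inv (Equiv.swap e f)) ∩ (Inv w)).card
      = invLength w + invLength (Equiv.swap e f) := by
  classical
  set τ := Equiv.swap e f with hτ
  have hττ : ∀ p : Fin n, τ (τ p) = p := fun p => Equiv.swap_apply_self e f p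
  have hinj : ∀ {p q : Fin n}, p ≠ q → τ p ≠ τ q := fun h hh => h (τ.injective hh)
  have key : (Inv (w * τ)).card = (((Inv τ) ∪ (Inv w)) \ ((Inv τ) ∩ (Inv w))).card := by
    apply Finset.card_bij' (i := fun p _ => if τ p.1 < τ p.2 then (τ p.1, τ p.2) else (τ p.2, τ p.1))
        (j := fun q _ => if τ q.1 < τ q.2 then (τ q.1, τ q.2) else (τ q.2, τ q.1))
    · -- hi
      intro p hp
      rw [mem_Inv] at hp
      obtain ⟨h1, h2⟩ := hp
      rw [Equiv.Perm.mul_apply, Equiv.Perm.mul_apply] at h2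
      simp only [Finset.mem_sdiff, Finset.mem_union, Finset.mem_inter, mem_Inv]
      rcases lt_or_gt_of_ne (hinj (ne_of_lt h1)) with hlt | hgt
      · rw [if_pos hlt]
        refine ⟨Or.inr ⟨hlt, h2⟩, ?_⟩
        rintro ⟨⟨-, hbad⟩, -⟩
        simp only [hττ] at hbad
        exact absurd hbad (not_lt.mpr h1.le)
      · rw [if_neg (not_lt.mpr hgt.le)]
        refine ⟨Or.inl ⟨hgt, by simp only [hττ]; exact h1⟩, ?_⟩
        rintro ⟨-, ⟨-, hbad⟩⟩
        exact absurd hbad (not_lt.mpr h2.le)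
    · -- hj
      intro q hq
      simp only [Finset.mem_sdiff, Finset.mem_union, Finset.mem_inter, mem_Inv] at hq
      obtain ⟨hun, hni⟩ := hq
      have hq12 : q.1 < q.2 := by rcases hun with h | h <;> exact h.1
      rw [mem_Inv]
      rcases lt_or_gt_of_ne (hinj (ne_of_lt hq12)) with hlt | hgt
      · rw [if_pos hlt]
        have hnA : ¬ (τ q.2 < τ q.1) := not_lt.mpr hlt.le
        have hB : w q.2 < w q.1 := by
          rcases hun with h | h
          · exact absurd h.2 hnA
          · exact h.2
        exact ⟨hlt, by rw [Equiv.Perm.mul_apply, Equiv.Perm.mul_apply]; simp only [hττ]; exact hB⟩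
      · rw [if_neg (not_lt.mpr hgt.le)]
        have hA : τ q.2 < τ q.1 := hgt
        have hnB : ¬ (w q.2 < w q.1) := fun hbad => hni ⟨⟨hq12, hA⟩, ⟨hq12, hbad⟩⟩
        have hB : w q.1 < w q.2 :=
          lt_of_le_of_ne (not_lt.mp hnB) (fun hh => (ne_of_lt hq12) (w.injective hh))
        refine ⟨hgt, ?_⟩
        rw [Equiv.Perm.mul_apply, Equiv.Perm.mul_apply]
        simp only [hττ]
        exact hB
    · -- left inverse
      intro p hp
      rw [mem_Inv] at hp
      rcases lt_or_gt_of_ne (hinj (ne_of_lt hp.1)) with hlt | hgt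
      · rw [if_pos hlt]; rw [if_pos (by simp only [hττ]; exact hp.1)]; simp [hττ]
      · rw [if_neg (not_lt.mpr hgt.le)]
        rw [if_neg (by simp only [hττ]; exact not_lt.mpr hp.1.le)]
        simp [hττ]
    · -- right inverse
      intro q hq
      simp only [Finset.mem_sdiff, Finset.mem_union, Finset.mem_inter, mem_Inv] at hq
      have hq12 : q.1 < q.2 := by rcases hq.1 with h | h <;> exact h.1
      rcases lt_or_gt_of_ne (hinj (ne_of_lt hq12)) with hlt | hgt
      · rw [if_pos hlt]; rw [if_pos (by simp only [hττ]; exact hq12)]; simp [hττ]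
      · rw [if_neg (not_lt.mpr hgt.le)]
        rw [if_neg (by simp only [hττ]; exact not_lt.mpr hq12.le)]
        simp [hττ]
  have h1 : (((Inv τ) ∪ (Inv w)) \ ((Inv τ) ∩ (Inv w))).card + ((Inv τ) ∩ (Inv w)).card
      = ((Inv τ) ∪ (Inv w)).card :=
    Finset.card_sdiff_add_card_eq_card (Finset.inter_subset_union)
  have h2 : ((Inv τ) ∪ (Inv w)).card + ((Inv τ) ∩ (Inv w)).card = (Inv τ).card + (Inv w).card :=
    Finset.card_union_add_card_inter _ _
  rw [invLength_eq_card, invLength_eq_card, invLength_eq_card, key]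
  omega

lemma mem_Inv_swap {e f : Fin n} (hef : e < f) (p : Fin n × Fin n) :
    p ∈ Inv (Equiv.swap e f) ↔
      (p = (e, f) ∨ (p.1 = e ∧ e < p.2 ∧ p.2 < f) ∨ (p.2 = f ∧ e < p.1 ∧ p.1 < f)) := by
  rw [mem_Inv]
  constructor
  · rintro ⟨h1, h2⟩
    by_cases q1e : p.1 = e
    · by_cases q2f : p.2 = f
      · exact Or.inl (Prod.ext q1e q2f)
      · refine Or.inr (Or.inl ⟨q1e, ?_, ?_⟩)
        · rw [← q1e]; exact h1
        · -- p.2 ≠ f, p.1 = e; swap p.2 : if p.2 = e impossible (p.1 = e < p.2)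
          by_contra hc
          have q2e : p.2 ≠ e := ne_of_gt (q1e ▸ h1)
          rw [Equiv.swap_apply_of_ne_of_ne q2e q2f, q1e, Equiv.swap_apply_left] at h2
          -- h2 : p.2 < f ; contradiction with hc
          exact hc h2
    · by_cases q2f : p.2 = f
      · refine Or.inr (Or.inr ⟨q2f, ?_, ?_⟩)
        · by_contra hc
          have q1f : p.1 ≠ f := ne_of_lt (q2f ▸ h1)
          rw [q2f, Equiv.swap_apply_right, Equiv.swap_apply_of_ne_of_ne q1e q1f] at h2
          exact hc h2
        · rw [← q2f]; exact h1
      · -- neither: show contradiction: swap fixes or...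
        exfalso
        by_cases q1f : p.1 = f
        · have q2e : p.2 ≠ e := fun hh => (ne_of_lt (lt_trans hef (q1f ▸ h1))).symm (hh ▸ rfl)
          rw [q1f, Equiv.swap_apply_right, Equiv.swap_apply_of_ne_of_ne q2e q2f] at h2
          exact absurd (lt_trans h2 (lt_trans hef (q1f ▸ h1))) (lt_irrefl _)
        · by_cases q2e : p.2 = e
          · rw [q2e, Equiv.swap_apply_left, Equiv.swap_apply_of_ne_of_ne q1e q1f] at h2
            exact absurd (lt_trans (lt_trans (q2e ▸ h1) hef) h2) (lt_irrefl _)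
          · rw [Equiv.swap_apply_of_ne_of_ne q2e q2f, Equiv.swap_apply_of_ne_of_ne q1e q1f] at h2
            exact absurd h2 (not_lt.mpr h1.le)
  · rintro (rfl | ⟨h1, h2, h3⟩ | ⟨h1, h2, h3⟩)
    · simp [hef, Equiv.swap_apply_left, Equiv.swap_apply_right]
    · rw [h1, Equiv.swap_apply_left, Equiv.swap_apply_of_ne_of_ne (ne_of_gt h2) (ne_of_lt h3)]
      exact ⟨h1 ▸ h2, h3⟩
    · rw [h1, Equiv.swap_apply_right, Equiv.swap_apply_of_ne_of_ne (ne_of_gt h2) (ne_of_lt h3)]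
      exact ⟨h1 ▸ h3, h2⟩

lemma card_Inv_swap {e f : Fin n} (hef : e < f) :
    invLength (Equiv.swap e f) = 2 * (Finset.Ioo e f).card + 1 := by
  classical
  have : Inv (Equiv.swap e f) =
      ((Finset.Ioo e f).image (fun k => (e, k)) ∪ (Finset.Ioo e f).image (fun k => (k, f)))
        ∪ {(e, f)} := by
    ext p
    rw [mem_Inv_swap hef]
    simp only [Finset.mem_union, Finset.mem_image, Finset.mem_Ioo, Finset.mem_singleton]
    constructor
    · rintro (h | ⟨h1, h2, h3⟩ | ⟨h1, h2, h3⟩)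
      · exact Or.inr h
      · exact Or.inl (Or.inl ⟨p.2, ⟨h2, h3⟩, by rw [← h1]⟩)
      · exact Or.inl (Or.inr ⟨p.1, ⟨h2, h3⟩, by rw [← h1]⟩)
    · rintro ((⟨k, ⟨hk1, hk2⟩, rfl⟩ | ⟨k, ⟨hk1, hk2⟩, rfl⟩) | h)
      · exact Or.inr (Or.inl ⟨rfl, hk1, hk2⟩)
      · exact Or.inr (Or.inr ⟨rfl, hk1, hk2⟩)
      · exact Or.inl h
  have d1 : Disjoint ((Finset.Ioo e f).image (fun k => ((e, k) : Fin n × Fin n)))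
      ((Finset.Ioo e f).image (fun k => (k, f))) := by
    simp only [Finset.disjoint_left, Finset.mem_image, Finset.mem_Ioo]
    rintro p ⟨k, ⟨hk1, hk2⟩, rfl⟩ ⟨k', ⟨hk1', hk2'⟩, hp⟩
    have h1 := (Prod.ext_iff.mp hp).1
    have h2 := (Prod.ext_iff.mp hp).2
    simp only at h1 h2
    exact absurd (h1 ▸ hk1') (lt_irrefl e)
  have d2 : Disjoint (((Finset.Ioo e f).image (fun k => ((e, k) : Fin n × Fin n)))
      ∪ ((Finset.Ioo e f).image (fun k => (k, f)))) {(e, f)} := by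
    simp only [Finset.disjoint_left, Finset.mem_union, Finset.mem_image, Finset.mem_Ioo,
      Finset.mem_singleton]
    rintro p (⟨k, ⟨hk1, hk2⟩, rfl⟩ | ⟨k, ⟨hk1, hk2⟩, rfl⟩) hp
    · exact absurd (Prod.ext_iff.mp hp).2 (by simpa using ne_of_lt hk2)
    · exact absurd (Prod.ext_iff.mp hp).1 (by simpa using ne_of_gt hk1)
  rw [invLength_eq_card, this, Finset.card_union_of_disjoint d2, Finset.card_union_of_disjoint d1,
    Finset.card_image_of_injective _ (fun a b hh => (Prod.ext_iff.mp hh).2),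
    Finset.card_image_of_injective _ (fun a b hh => (Prod.ext_iff.mp hh).1),
    Finset.card_singleton]
  ring

lemma val_lt_of_invLength_lt {w : Equiv.Perm (Fin n)} {e f : Fin n} (hef : e < f)
    (h : invLength w < invLength (w * Equiv.swap e f)) : w e < w f := by
  classical
  by_contra hv
  have hfe : w f < w e :=
    lt_of_le_of_ne (not_lt.mp hv) (fun hh => (ne_of_lt hef) (w.injective hh).symm)
  have hbound : (Finset.Ioo e f).card + 1 ≤ ((Inv (Equiv.swap e f)) ∩ (Inv w)).card := by
    have hcard : (insert e (Finset.Ioo e f)).card = (Finset.Ioo e f).card + 1 :=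
      Finset.card_insert_of_notMem (by simp)
    rw [← hcard]
    apply Finset.card_le_card_of_injOn
      (fun k => if k = e then (e, f) else if w k < w e then (e, k) else (k, f))
    · intro k hk
      simp only [Finset.mem_coe, Finset.mem_insert, Finset.mem_Ioo] at hk
      simp only [Finset.mem_coe, Finset.mem_inter, mem_Inv_swap hef, mem_Inv]
      rcases hk with rfl | ⟨hk1, hk2⟩
      · rw [if_pos rfl]
        exact ⟨Or.inl rfl, hef, hfe⟩
      · rw [if_neg (ne_of_gt hk1)]
        by_cases hwk : w k < w e
        · rw [if_pos hwk]
          exact ⟨Or.inr (Or.inl ⟨rfl, hk1, hk2⟩), hk1, hwk⟩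
        · rw [if_neg hwk]
          have : w f < w k := lt_of_lt_of_le hfe
            (lt_of_le_of_ne (not_lt.mp hwk)
              (fun hh => (ne_of_gt hk1) (w.injective hh.symm))).le
          exact ⟨Or.inr (Or.inr ⟨rfl, hk1, hk2⟩), hk2, this⟩
    · intro k hk l hl hkl
      simp only at hkl
      simp only [Finset.coe_insert, Set.mem_insert_iff, Finset.mem_coe, Finset.mem_Ioo] at hk hl
      by_cases hke : k = e <;> by_cases hle : l = e
      · rw [hke, hle]
      · exfalso
        rw [if_pos hke, if_neg hle] at hkl
        by_cases hwl : w l < w e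
        · rw [if_pos hwl, Prod.mk.injEq] at hkl
          rcases hl with rfl | ⟨_, hl2⟩
          · exact hle rfl
          · exact (ne_of_lt hl2) hkl.2.symm
        · rw [if_neg hwl, Prod.mk.injEq] at hkl
          rcases hl with rfl | ⟨hl1, _⟩
          · exact hle rfl
          · exact (ne_of_gt hl1) hkl.1.symm
      · exfalso
        rw [if_neg hke, if_pos hle] at hkl
        by_cases hwk : w k < w e
        · rw [if_pos hwk, Prod.mk.injEq] at hkl
          rcases hk with rfl | ⟨_, hk2⟩
          · exact hke rfl
          · exact (ne_of_lt hk2) hkl.2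
        · rw [if_neg hwk, Prod.mk.injEq] at hkl
          rcases hk with rfl | ⟨hk1, _⟩
          · exact hke rfl
          · exact (ne_of_gt hk1) hkl.1
      · rw [if_neg hke, if_neg hle] at hkl
        rcases hk with rfl | ⟨hk1, hk2⟩; · exact absurd rfl hke
        rcases hl with rfl | ⟨hl1, hl2⟩; · exact absurd rfl hle
        by_cases hwk : w k < w e <;> by_cases hwl : w l < w e
        · rw [if_pos hwk, if_pos hwl, Prod.mk.injEq] at hkl; exact hkl.2
        · exfalso
          rw [if_pos hwk, if_neg hwl, Prod.mk.injEq] at hkl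
          exact (ne_of_gt hl1) hkl.1.symm
        · exfalso
          rw [if_neg hwk, if_pos hwl, Prod.mk.injEq] at hkl
          exact (ne_of_gt hk1) hkl.1
        · rw [if_neg hwk, if_neg hwl, Prod.mk.injEq] at hkl; exact hkl.1
  have hm := master w e f
  rw [card_Inv_swap hef] at hm
  omega

lemma cover_of_invLength {w : Equiv.Perm (Fin n)} {e f : Fin n} (hef : e < f)
    (hv : w e < w f) (hlen : invLength (w * Equiv.swap e f) = invLength w + 1) :
    ∀ k : Fin n, e < k → k < f → ¬(w e < w k ∧ w k < w f) := by
  classical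
  intro k₀ hk₀1 hk₀2 hk₀v
  have hk₀ : k₀ ∈ Finset.Ioo e f := Finset.mem_Ioo.mpr ⟨hk₀1, hk₀2⟩
  have hbound : ((Inv (Equiv.swap e f)) ∩ (Inv w)).card ≤ (Finset.Ioo e f).card - 1 := by
    have := Finset.card_erase_of_mem hk₀
    rw [← this]
    apply Finset.card_le_card_of_injOn (fun p => if p.1 = e then p.2 else p.1)
    · intro p hp
      simp only [Finset.mem_coe, Finset.mem_inter, mem_Inv_swap hef, mem_Inv] at hp
      obtain ⟨hshape, hp12, hpw⟩ := hp
      simp only [Finset.mem_coe, Finset.mem_erase, Finset.mem_Ioo]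
      rcases hshape with rfl | ⟨h1, h2, h3⟩ | ⟨h1, h2, h3⟩
      · exact absurd hpw (not_lt.mpr hv.le)
      · rw [if_pos h1]
        rw [h1] at hpw
        refine ⟨fun hh => ?_, h2, h3⟩
        rw [hh] at hpw
        exact absurd hk₀v.1 (not_lt.mpr hpw.le)
      · rw [if_neg (ne_of_gt h2)]
        rw [h1] at hpw
        refine ⟨fun hh => ?_, h2, h3⟩
        rw [hh] at hpw
        exact absurd hk₀v.2 (not_lt.mpr hpw.le)
    · intro p hp q hq hpq
      simp only at hpq
      simp only [Finset.coe_inter, Set.mem_inter_iff, Finset.mem_coe, mem_Inv_swap hef,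
        mem_Inv] at hp hq
      obtain ⟨hps, hp12, hpw⟩ := hp
      obtain ⟨hqs, hq12, hqw⟩ := hq
      have hpef : p ≠ (e, f) := fun hh => (by rw [hh] at hpw; exact absurd hpw (not_lt.mpr hv.le))
      have hqef : q ≠ (e, f) := fun hh => (by rw [hh] at hqw; exact absurd hqw (not_lt.mpr hv.le))
      rcases hps with hps | ⟨hp1, hp2, hp3⟩ | ⟨hp1, hp2, hp3⟩
      · exact absurd hps hpef
      all_goals rcases hqs with hqs | ⟨hq1, hq2, hq3⟩ | ⟨hq1, hq2, hq3⟩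
      · exact absurd hqs hqef
      · rw [if_pos hp1, if_pos hq1] at hpq
        exact Prod.ext (hp1.trans hq1.symm) hpq
      · exfalso
        rw [if_pos hp1, if_neg (ne_of_gt hq2)] at hpq
        rw [hp1] at hpw; rw [hq1] at hqw; rw [hpq] at hpw
        exact absurd (lt_trans hqw hpw) (not_lt.mpr hv.le)
      · exact absurd hqs hqef
      · exfalso
        rw [if_neg (ne_of_gt hp2), if_pos hq1] at hpq
        rw [hp1] at hpw; rw [hq1] at hqw; rw [← hpq] at hqw
        exact absurd (lt_trans hpw hqw) (not_lt.mpr hv.le)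
      · rw [if_neg (ne_of_gt hp2), if_neg (ne_of_gt hq2)] at hpq
        exact Prod.ext hpq (hp1.trans hq1.symm)
  have hm := master w e f
  rw [card_Inv_swap hef, hlen] at hm
  have hio : 1 ≤ (Finset.Ioo e f).card := Finset.card_pos.mpr ⟨k₀, hk₀⟩
  omega

def CondP (w : Equiv.Perm (Fin n)) (e f : Fin n) : Prop :=
  (e : ℕ) % 2 = (f : ℕ) % 2 ∧
  ∀ k : Fin n, (e : ℕ) < (k : ℕ) → (k : ℕ) % 2 ≠ (f : ℕ) % 2 →
    ((w k : ℕ) < (w e : ℕ) ∨ ((f : ℕ) < (k : ℕ) ∧ (w f : ℕ) < (w k : ℕ)))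

lemma mem_oddDiagram {w : Equiv.Perm (Fin n)} {p : Fin n × Fin n} :
    p ∈ oddDiagram w ↔ (p.2 : ℕ) < (w p.1 : ℕ) ∧ (p.1 : ℕ) < (w.symm p.2 : ℕ) ∧
      (p.1 : ℕ) % 2 ≠ (w.symm p.2 : ℕ) % 2 := by simp [oddDiagram]

lemma symm_mul_swap {w : Equiv.Perm (Fin n)} {e f : Fin n} (j : Fin n) :
    (w * Equiv.swap e f).symm j = Equiv.swap e f (w.symm j) := by
  rw [show (w * Equiv.swap e f).symm j = (Equiv.swap e f).symm (w.symm j) from rfl,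
    Equiv.symm_swap]

lemma oddDiagram_swap_eq {w : Equiv.Perm (Fin n)} {e f : Fin n} (hef : e < f)
    (hv : (w e : ℕ) < (w f : ℕ)) (hc : CondP w e f) :
    oddDiagram (w * Equiv.swap e f) = oddDiagram w := by
  obtain ⟨hpar, hcond⟩ := hc
  have hefν : (e : ℕ) < (f : ℕ) := hef
  ext ⟨i, j⟩
  rw [mem_oddDiagram, mem_oddDiagram]
  obtain ⟨k, rfl⟩ : ∃ k, j = w k := ⟨w.symm j, (w.apply_symm_apply j).symm⟩
  simp only [symm_mul_swap, Equiv.symm_apply_apply, Equiv.Perm.mul_apply]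
  have hne : e ≠ f := ne_of_lt hef
  rcases eq_or_ne e i with rfl | hie
  · rcases eq_or_ne e k with rfl | hke
    · simp only [Equiv.swap_apply_left]; omega
    · rcases eq_or_ne f k with rfl | hkf
      · simp only [Equiv.swap_apply_left, Equiv.swap_apply_right]; omega
      · simp only [Equiv.swap_apply_left, Equiv.swap_apply_of_ne_of_ne hke.symm hkf.symm]
        by_cases hek : (e : ℕ) < (k : ℕ)
        · by_cases hpk : (k : ℕ) % 2 = (f : ℕ) % 2
          · omega
          · rcases hcond k hek hpk with h | ⟨h1, h2⟩ <;> omega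
        · omega
  · rcases eq_or_ne f i with rfl | hif
    · rcases eq_or_ne e k with rfl | hke
      · simp only [Equiv.swap_apply_left, Equiv.swap_apply_right]; omega
      · rcases eq_or_ne f k with rfl | hkf
        · simp only [Equiv.swap_apply_right]; omega
        · simp only [Equiv.swap_apply_right, Equiv.swap_apply_of_ne_of_ne hke.symm hkf.symm]
          by_cases hfk : (f : ℕ) < (k : ℕ)
          · by_cases hpk : (k : ℕ) % 2 = (f : ℕ) % 2
            · omega
            · rcases hcond k (by omega) hpk with h | ⟨h1, h2⟩ <;> omega
          · omega
    · have hτi : Equiv.swap e f i = i := Equiv.swap_apply_of_ne_of_ne hie.symm hif.symm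
      rcases eq_or_ne e k with rfl | hke
      · simp only [hτi, Equiv.swap_apply_left]
        by_cases hie2 : (i : ℕ) < (e : ℕ)
        · omega
        · have hiν : (i : ℕ) ≠ (e : ℕ) := (pne hie).symm
          have hei : (e : ℕ) < (i : ℕ) := by omega
          by_cases hpi : (i : ℕ) % 2 = (f : ℕ) % 2
          · omega
          · rcases hcond i hei hpi with h | ⟨h1, h2⟩ <;> omega
      · rcases eq_or_ne f k with rfl | hkf
        · simp only [hτi, Equiv.swap_apply_right]
          by_cases hie2 : (i : ℕ) < (e : ℕ)
          · omega
          · have hiν : (i : ℕ) ≠ (e : ℕ) := (pne hie).symm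
            have hei : (e : ℕ) < (i : ℕ) := by omega
            by_cases hpi : (i : ℕ) % 2 = (f : ℕ) % 2
            · omega
            · rcases hcond i hei hpi with h | ⟨h1, h2⟩ <;> omega
        · simp only [hτi, Equiv.swap_apply_of_ne_of_ne hke.symm hkf.symm]

lemma condP_of_oddDiagram_eq {w : Equiv.Perm (Fin n)} {e f : Fin n} (hef : e < f)
    (hv : (w e : ℕ) < (w f : ℕ))
    (h : oddDiagram (w * Equiv.swap e f) = oddDiagram w) : CondP w e f := by
  have hefν : (e : ℕ) < (f : ℕ) := hef
  have hpar : (e : ℕ) % 2 = (f : ℕ) % 2 := by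
    by_contra hp
    have hcell : ((e, w e) : Fin n × Fin n) ∈ oddDiagram (w * Equiv.swap e f) := by
      rw [mem_oddDiagram]
      simp only [symm_mul_swap, Equiv.symm_apply_apply, Equiv.Perm.mul_apply,
        Equiv.swap_apply_left]
      exact ⟨hv, hefν, hp⟩
    rw [h, mem_oddDiagram] at hcell
    exact absurd hcell.1 (lt_irrefl _)
  refine ⟨hpar, ?_⟩
  intro k hk hpk
  have hke : k ≠ e := fun hh => hpk (by rw [hh]; exact hpar)
  have hkf : k ≠ f := fun hh => hpk (by rw [hh])
  by_contra hcon
  push_neg at hcon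
  obtain ⟨hA, hBC⟩ := hcon
  have hwk : (w e : ℕ) < (w k : ℕ) := by
    have := vne w hke
    omega
  by_cases hkfv : (w k : ℕ) < (w f : ℕ)
  · have hcell : ((e, w k) : Fin n × Fin n) ∈ oddDiagram (w * Equiv.swap e f) := by
      rw [mem_oddDiagram]
      simp only [symm_mul_swap, Equiv.symm_apply_apply, Equiv.Perm.mul_apply,
        Equiv.swap_apply_left, Equiv.swap_apply_of_ne_of_ne hke hkf]
      exact ⟨hkfv, hk, by omega⟩
    rw [h, mem_oddDiagram] at hcell
    simp only [Equiv.symm_apply_apply] at hcell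
    omega
  · have hwkf : (w f : ℕ) < (w k : ℕ) := by
      have := vne w hkf
      omega
    have hkltf : (k : ℕ) < (f : ℕ) := by
      by_cases h' : (f : ℕ) < (k : ℕ)
      · have := hBC h'
        omega
      · have := pne hkf
        omega
    have hcell : ((k, w e) : Fin n × Fin n) ∈ oddDiagram (w * Equiv.swap e f) := by
      rw [mem_oddDiagram]
      simp only [symm_mul_swap, Equiv.symm_apply_apply, Equiv.Perm.mul_apply,
        Equiv.swap_apply_left, Equiv.swap_apply_of_ne_of_ne hke hkf]
      exact ⟨hwk, hkltf, hpk⟩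
    rw [h, mem_oddDiagram] at hcell
    simp only [Equiv.symm_apply_apply] at hcell
    omega

def CoverP (w : Equiv.Perm (Fin n)) (e f : Fin n) : Prop :=
  ∀ k : Fin n, (e : ℕ) < (k : ℕ) → (k : ℕ) < (f : ℕ) →
    ¬((w e : ℕ) < (w k : ℕ) ∧ (w k : ℕ) < (w f : ℕ))

lemma yvA (x : Equiv.Perm (Fin n)) (a b : Fin n) :
    ((x * Equiv.swap a b) a : ℕ) = (x b : ℕ) := by
  rw [Equiv.Perm.mul_apply, Equiv.swap_apply_left]

lemma yvB (x : Equiv.Perm (Fin n)) (a b : Fin n) :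
    ((x * Equiv.swap a b) b : ℕ) = (x a : ℕ) := by
  rw [Equiv.Perm.mul_apply, Equiv.swap_apply_right]

lemma yvO (x : Equiv.Perm (Fin n)) {a b k : Fin n} (h1 : k ≠ a) (h2 : k ≠ b) :
    ((x * Equiv.swap a b) k : ℕ) = (x k : ℕ) := by
  rw [Equiv.Perm.mul_apply, Equiv.swap_apply_of_ne_of_ne h1 h2]

lemma caseI {x : Equiv.Perm (Fin n)} {a b c d : Fin n}
    (hab : (a : ℕ) < b) (hcd : (c : ℕ) < d)
    (hac : a ≠ c) (had : a ≠ d) (hbc : b ≠ c) (hbd : b ≠ d)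
    (hvx : (x a : ℕ) < x b) (hve : (x c : ℕ) < x d)
    (Hx : CondP x a b) (Hy : CondP (x * Equiv.swap a b) c d)
    (covx : CoverP x a b) (cove : CoverP x c d) :
    CondP x c d := by
  have yA := yvA x a b
  have yB := yvB x a b
  have yC := yvO x (a := a) (b := b) hac.symm hbc.symm
  have yD := yvO x (a := a) (b := b) had.symm hbd.symm
  refine ⟨Hy.1, ?_⟩
  intro k hk hpk
  by_cases hka : k = a
  · subst hka
    have Ha := Hy.2 k hk hpk
    rw [yA, yC, yD] at Ha
    rcases Ha with h | ⟨hda, hdb⟩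
    · left; omega
    · -- d < k(=a), x d < x b; goal : x k < x c ∨ (d < k ∧ x d < x k)
      by_contra hcon
      push_neg at hcon
      have h1 : (x c : ℕ) < x k := by
        have := vne x hac.symm; omega
      have h2 : (x k : ℕ) < x d := by
        have := vne x had.symm
        have := hcon.2 hda
        omega
      have Hb := Hy.2 b (by omega) (by have := Hx.1; omega)
      rw [yB, yC, yD] at Hb
      omega
  · by_cases hkb : k = b
    · subst hkb
      have Hb := Hy.2 k hk hpk
      rw [yB, yC, yD] at Hb
      rcases Hb with ha | ⟨hdb, hdba⟩
      · -- x a < x c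
        by_contra hcon
        push_neg at hcon
        have hcb : (x c : ℕ) < x k := by
          have := vne x hbc.symm; omega
        by_cases hdb2 : (d : ℕ) < k
        · -- γ < β, β < δ? from hcon.2: x k ≤ x d → <
          have hbd2 : (x k : ℕ) < x d := by
            have := vne x hbd; have := hcon.2 hdb2; omega
          -- split on a vs c
          by_cases hac2 : (a : ℕ) < c
          · -- c ∈ (a,b) : covx at c
            exact covx c hac2 (by omega) ⟨by omega, by omega⟩
          · -- c < a : Hy at a
            have haν : (a : ℕ) ≠ c := pne hac
            have Ha := Hy.2 a (by omega) (by have := Hx.1; omega)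
            rw [yA, yC, yD] at Ha
            omega
        · -- k < d (k ≠ d by parity)
          have hkd : (k : ℕ) < d := by
            have : (k : ℕ) ≠ d := by have := Hy.1; omega
            omega
          by_cases hbdv : (x k : ℕ) < x d
          · -- cove at k : c < k < d, x c < x k < x d
            exact cove k hk hkd ⟨by omega, by omega⟩
          · -- x d < x k
            have hdk : (x d : ℕ) < x k := by have := vne x hbd.symm; omega
            have Hd := Hx.2 d (by omega) (by omega)
            omega
      · right; exact ⟨hdb, by omega⟩
    · -- k ∉ {a, b}
      have H := Hy.2 k hk hpk
      rw [yvO x hka hkb, yC, yD] at H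
      exact H

lemma caseII1 {x : Equiv.Perm (Fin n)} {a b d : Fin n}
    (hab : (a : ℕ) < b) (hbd : (b : ℕ) < d)
    (hvx : (x a : ℕ) < x b)
    (Hx : CondP x a b) (Hy : CondP (x * Equiv.swap a b) b d) :
    CondP x b d := by
  refine ⟨Hy.1, ?_⟩
  intro k hk hpk
  have hka : k ≠ a := fun h => by subst h; omega
  have hkb : k ≠ b := fun h => by subst h; omega
  have hdb : d ≠ a := fun h => by subst h; omega
  have hdbb : d ≠ b := fun h => by subst h; omega
  have H := Hy.2 k hk hpk
  rw [yvO x hka hkb, yvB, yvO x hdb hdbb] at H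
  rcases H with h | h
  · left; omega
  · right; exact h

lemma caseII2 {x : Equiv.Perm (Fin n)} {a b d : Fin n}
    (hab : (a : ℕ) < b) (hbd : (b : ℕ) < d)
    (hvx : (x a : ℕ) < x b)
    (Hx : CondP x a b) (Hy : CondP (x * Equiv.swap a b) b d) :
    CondP x a d := by
  have hpad : (a : ℕ) % 2 = (d : ℕ) % 2 := by have := Hx.1; have := Hy.1; omega
  refine ⟨hpad, ?_⟩
  intro k hk hpk
  have hka : k ≠ a := fun h => by subst h; omega
  have hkb : k ≠ b := fun h => by subst h; have := Hy.1; omega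
  have hdb : d ≠ a := fun h => by subst h; omega
  have hdbb : d ≠ b := fun h => by subst h; omega
  by_cases hkb2 : (k : ℕ) < b
  · rcases Hx.2 k hk (by have := Hy.1; omega) with h | h
    · left; omega
    · omega
  · have H := Hy.2 k (by have := pne hkb; omega) hpk
    rw [yvO x hka hkb, yvB, yvO x hdb hdbb] at H
    rcases H with h | h
    · left; omega
    · right; exact h

lemma caseII3 {x : Equiv.Perm (Fin n)} {a b c : Fin n}
    (hab : (a : ℕ) < b) (hcb : (c : ℕ) < b) (hca : c ≠ a)
    (hvx : (x a : ℕ) < x b)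
    (Hx : CondP x a b) (Hy : CondP (x * Equiv.swap a b) c b) :
    CondP x c b := by
  have hcbn : c ≠ b := fun h => by subst h; omega
  refine ⟨Hy.1, ?_⟩
  intro k hk hpk
  have hka : k ≠ a := fun h => by subst h; have := Hx.1; omega
  have hkb : k ≠ b := fun h => by subst h; omega
  have H := Hy.2 k hk hpk
  rw [yvO x hka hkb, yvO x hca hcbn, yvB] at H
  by_cases hkb2 : (k : ℕ) < b
  · rcases H with h | h
    · left; omega
    · omega
  · rcases H with h | ⟨h1, h2⟩
    · left; omega
    · rcases Hx.2 k (by omega) hpk with h | h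
      · omega
      · right; exact h

lemma caseII4 {x : Equiv.Perm (Fin n)} {a b c : Fin n}
    (hab : (a : ℕ) < b) (hca : (c : ℕ) < a)
    (hvx : (x a : ℕ) < x b)
    (Hx : CondP x a b) (Hy : CondP (x * Equiv.swap a b) c b) :
    CondP x c a := by
  have hpca : (c : ℕ) % 2 = (a : ℕ) % 2 := by have := Hx.1; have := Hy.1; omega
  refine ⟨hpca, ?_⟩
  intro k hk hpk
  have hka : k ≠ a := fun h => by subst h; omega
  have hkb : k ≠ b := fun h => by subst h; have := Hx.1; omega
  have hcan : c ≠ a := fun h => by subst h; omega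
  have hcbn : c ≠ b := fun h => by subst h; omega
  have H := Hy.2 k hk (by have := Hx.1; omega)
  rw [yvO x hka hkb, yvO x hcan hcbn, yvB] at H
  rcases H with h | ⟨h1, h2⟩
  · left; omega
  · right; exact ⟨by omega, by omega⟩

lemma caseII5 {x : Equiv.Perm (Fin n)} {a b d : Fin n}
    (hab : (a : ℕ) < b) (had : (a : ℕ) < d) (hbd : b ≠ d)
    (hvx : (x a : ℕ) < x b)
    (Hx : CondP x a b) (Hy : CondP (x * Equiv.swap a b) a d) :
    CondP x a d := by
  refine ⟨Hy.1, ?_⟩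
  intro k hk hpk
  have hka : k ≠ a := fun h => by subst h; omega
  have hkb : k ≠ b := fun h => by subst h; have := Hx.1; have := Hy.1; omega
  have hdan : d ≠ a := fun h => by subst h; omega
  rcases Hx.2 k hk (by have := Hx.1; have := Hy.1; omega) with h | ⟨h1, h2⟩
  · left; omega
  · have H := Hy.2 k hk hpk
    rw [yvO x hka hkb, yvA, yvO x hdan hbd.symm] at H
    rcases H with h | h
    · omega
    · right; exact h

lemma caseII6 {x : Equiv.Perm (Fin n)} {a b d : Fin n}
    (hab : (a : ℕ) < b) (hbd : (b : ℕ) < d)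
    (hvx : (x a : ℕ) < x b)
    (Hx : CondP x a b) (Hy : CondP (x * Equiv.swap a b) a d) :
    CondP x b d := by
  have hp : (b : ℕ) % 2 = (d : ℕ) % 2 := by have := Hx.1; have := Hy.1; omega
  refine ⟨hp, ?_⟩
  intro k hk hpk
  have hka : k ≠ a := fun h => by subst h; omega
  have hkb : k ≠ b := fun h => by subst h; omega
  have hdan : d ≠ a := fun h => by subst h; omega
  have hdbn : d ≠ b := fun h => by subst h; omega
  have H := Hy.2 k (by omega) hpk
  rw [yvO x hka hkb, yvA, yvO x hdan hdbn] at H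
  rcases H with h | h
  · left; omega
  · right; exact h

lemma caseII7 {x : Equiv.Perm (Fin n)} {a b c : Fin n}
    (hab : (a : ℕ) < b) (hca : (c : ℕ) < a)
    (hvx : (x a : ℕ) < x b)
    (Hx : CondP x a b) (Hy : CondP (x * Equiv.swap a b) c a) :
    CondP x c a := by
  refine ⟨Hy.1, ?_⟩
  intro k hk hpk
  have hka : k ≠ a := fun h => by subst h; omega
  have hkb : k ≠ b := fun h => by subst h; have := Hx.1; omega
  have hcan : c ≠ a := fun h => by subst h; omega
  have hcbn : c ≠ b := fun h => by subst h; omega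
  have H := Hy.2 k hk hpk
  rw [yvO x hka hkb, yvO x hcan hcbn, yvA] at H
  rcases H with h | ⟨h1, h2⟩
  · left; omega
  · right; exact ⟨h1, by omega⟩

lemma caseII8 {x : Equiv.Perm (Fin n)} {a b c : Fin n}
    (hab : (a : ℕ) < b) (hca : (c : ℕ) < a)
    (hvx : (x a : ℕ) < x b)
    (Hx : CondP x a b) (Hy : CondP (x * Equiv.swap a b) c a) :
    CondP x c b := by
  have hp : (c : ℕ) % 2 = (b : ℕ) % 2 := by have := Hx.1; have := Hy.1; omega
  refine ⟨hp, ?_⟩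
  intro k hk hpk
  have hka : k ≠ a := fun h => by subst h; have := Hx.1; omega
  have hkb : k ≠ b := fun h => by subst h; omega
  have hcan : c ≠ a := fun h => by subst h; omega
  have hcbn : c ≠ b := fun h => by subst h; omega
  have H := Hy.2 k hk (by have := Hx.1; omega)
  rw [yvO x hka hkb, yvO x hcan hcbn, yvA] at H
  rcases H with h | ⟨h1, h2⟩
  · left; omega
  · by_cases hkb2 : (k : ℕ) < b
    · rcases Hx.2 k h1 (by have := Hx.1; omega) with h | h
      · omega
      · omega
    · right; exact ⟨by have := pne hkb; omega, by omega⟩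

lemma le_invLength_of_bruhatLE {u v : Equiv.Perm (Fin n)} (h : bruhatLE u v) :
    invLength u ≤ invLength v := by
  induction h with
  | refl => exact le_refl _
  | tail _ hstep ih =>
      obtain ⟨t, _, _, hlt⟩ := hstep
      exact le_trans ih hlt.le

lemma eq_of_bruhatLE_ge {u v : Equiv.Perm (Fin n)} (h : bruhatLE u v)
    (hle : invLength v ≤ invLength u) : u = v := by
  rcases Relation.ReflTransGen.cases_head h with rfl | ⟨w', hstep, htail⟩
  · rfl
  · obtain ⟨t, _, _, hlt⟩ := hstep
    have := le_invLength_of_bruhatLE htail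
    exfalso; omega

lemma step_of_bruhatLE {u v : Equiv.Perm (Fin n)} (h : bruhatLE u v)
    (hlen : invLength v = invLength u + 1) :
    ∃ e f : Fin n, (e : ℕ) < (f : ℕ) ∧ v = u * Equiv.swap e f := by
  rcases Relation.ReflTransGen.cases_head h with rfl | ⟨w', hstep, htail⟩
  · exfalso; omega
  · obtain ⟨t, hsw, heq, hlt⟩ := hstep
    have h1 := le_invLength_of_bruhatLE htail
    have hwv : w' = v := eq_of_bruhatLE_ge htail (by omega)
    subst hwv
    obtain ⟨p, q, hpq, rfl⟩ := hsw
    rcases lt_or_gt_of_ne hpq with hlt2 | hlt2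
    · exact ⟨p, q, Fin.lt_def.mp hlt2, heq⟩
    · exact ⟨q, p, Fin.lt_def.mp hlt2, by rw [Equiv.swap_comm] at heq; exact heq⟩

lemma cov_step {u v : Equiv.Perm (Fin n)} (h : bruhatCov u v) :
    ∃ e f : Fin n, (e : ℕ) < (f : ℕ) ∧ v = u * Equiv.swap e f :=
  step_of_bruhatLE h.1.to_reflTransGen h.2

lemma step_facts {u : Equiv.Perm (Fin n)} {e f : Fin n} (hef : (e : ℕ) < f)
    (hlen : invLength (u * Equiv.swap e f) = invLength u + 1) :
    (u e : ℕ) < u f ∧ CoverP u e f := by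
  have hefF : e < f := Fin.lt_def.mpr hef
  have hv := val_lt_of_invLength_lt (w := u) hefF (by omega)
  refine ⟨Fin.lt_def.mp hv, ?_⟩
  intro k h1 h2 hcon
  exact cover_of_invLength hefF hv hlen k (Fin.lt_def.mpr h1) (Fin.lt_def.mpr h2)
    ⟨Fin.lt_def.mpr hcon.1, Fin.lt_def.mpr hcon.2⟩

lemma swap_moves_of_ne {g h p : Fin n} (hmoves : Equiv.swap g h p ≠ p) : p = g ∨ p = h := by
  by_contra hc
  push_neg at hc
  exact hmoves (Equiv.swap_apply_of_ne_of_ne hc.1 hc.2)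

lemma prod_swap_moves_left {e f g h : Fin n} (hef : e ≠ f) (hgh : g ≠ h)
    (hne : Equiv.swap e f * Equiv.swap g h ≠ 1) :
    (Equiv.swap e f * Equiv.swap g h) e ≠ e := by
  rw [Equiv.Perm.mul_apply]
  by_cases heg : e = g
  · have h1 : Equiv.swap g h e = h := by rw [heg]; exact Equiv.swap_apply_left g h
    rw [h1]
    by_cases hhf : h = f
    · exfalso
      apply hne
      rw [heg, hhf]
      exact Equiv.swap_mul_self g f
    · have hhe : h ≠ e := fun hh => hgh.symm (hh.trans heg)
      rw [Equiv.swap_apply_of_ne_of_ne hhe hhf]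
      exact hhe
  · by_cases heh : e = h
    · have h1 : Equiv.swap g h e = g := by rw [heh]; exact Equiv.swap_apply_right g h
      rw [h1]
      by_cases hgf : g = f
      · exfalso
        apply hne
        rw [heh, hgf, Equiv.swap_comm f h]
        exact Equiv.swap_mul_self h f
      · have hge : g ≠ e := fun hh => hgh (hh.trans heh)
        rw [Equiv.swap_apply_of_ne_of_ne hge hgf]
        exact hge
    · rw [Equiv.swap_apply_of_ne_of_ne heg heh, Equiv.swap_apply_left]
      exact hef.symm

lemma prod_swap_moves_right {e f g h : Fin n} (hef : e ≠ f) (hgh : g ≠ h)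
    (hne : Equiv.swap e f * Equiv.swap g h ≠ 1) :
    (Equiv.swap e f * Equiv.swap g h) f ≠ f := by
  have := prod_swap_moves_left (e := f) (f := e) hef.symm hgh
    (by rw [Equiv.swap_comm]; exact hne)
  rwa [Equiv.swap_comm f e] at this

lemma mixed_kill {g h p q r : Fin n} (hpq : p ≠ q) (hpr : p ≠ r) (hqr : q ≠ r)
    (h1 : Equiv.swap g h p ≠ p) (h2 : Equiv.swap g h q ≠ q)
    (h3 : Equiv.swap g h r ≠ r) : False := by
  rcases swap_moves_of_ne h1 with e1 | e1 <;>
  rcases swap_moves_of_ne h2 with e2 | e2 <;>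
  rcases swap_moves_of_ne h3 with e3 | e3 <;>
  first
    | exact hpq (e1.trans e2.symm)
    | exact hpr (e1.trans e3.symm)
    | exact hqr (e2.trans e3.symm)

lemma kill_ac {a b c d g h : Fin n} (nab : a ≠ b) (ncd : c ≠ d) (nac : a ≠ c)
    (nad : a ≠ d) (nbc : b ≠ c) (nbd : b ≠ d)
    (hs : Equiv.swap g h = Equiv.swap a c * (Equiv.swap a b * Equiv.swap c d)) : False := by
  have i1 : Equiv.swap g h a = b := by
    rw [hs, Equiv.Perm.mul_apply, Equiv.Perm.mul_apply,
      Equiv.swap_apply_of_ne_of_ne nac nad, Equiv.swap_apply_left,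
      Equiv.swap_apply_of_ne_of_ne nab.symm nbc]
  have i2 : Equiv.swap g h b = c := by
    rw [hs, Equiv.Perm.mul_apply, Equiv.Perm.mul_apply,
      Equiv.swap_apply_of_ne_of_ne nbc nbd, Equiv.swap_apply_right,
      Equiv.swap_apply_left]
  have i3 : Equiv.swap g h c = d := by
    rw [hs, Equiv.Perm.mul_apply, Equiv.Perm.mul_apply,
      Equiv.swap_apply_left, Equiv.swap_apply_of_ne_of_ne nad.symm nbd.symm,
      Equiv.swap_apply_of_ne_of_ne nad.symm ncd.symm]
  exact mixed_kill nab nac nbc (by rw [i1]; exact nab.symm) (by rw [i2]; exact nbc.symm)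
    (by rw [i3]; exact ncd.symm)

lemma kill_ad {a b c d g h : Fin n} (nab : a ≠ b) (ncd : c ≠ d) (nac : a ≠ c)
    (nad : a ≠ d) (nbc : b ≠ c) (nbd : b ≠ d)
    (hs : Equiv.swap g h = Equiv.swap a d * (Equiv.swap a b * Equiv.swap c d)) : False := by
  have i1 : Equiv.swap g h a = b := by
    rw [hs, Equiv.Perm.mul_apply, Equiv.Perm.mul_apply,
      Equiv.swap_apply_of_ne_of_ne nac nad, Equiv.swap_apply_left,
      Equiv.swap_apply_of_ne_of_ne nab.symm nbd]
  have i2 : Equiv.swap g h b = d := by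
    rw [hs, Equiv.Perm.mul_apply, Equiv.Perm.mul_apply,
      Equiv.swap_apply_of_ne_of_ne nbc nbd, Equiv.swap_apply_right,
      Equiv.swap_apply_left]
  have i3 : Equiv.swap g h c = a := by
    rw [hs, Equiv.Perm.mul_apply, Equiv.Perm.mul_apply,
      Equiv.swap_apply_left, Equiv.swap_apply_of_ne_of_ne nad.symm nbd.symm,
      Equiv.swap_apply_right]
  exact mixed_kill nab nac nbc (by rw [i1]; exact nab.symm) (by rw [i2]; exact nbd.symm)
    (by rw [i3]; exact nac)

lemma kill_bc {a b c d g h : Fin n} (nab : a ≠ b) (ncd : c ≠ d) (nac : a ≠ c)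
    (nad : a ≠ d) (nbc : b ≠ c) (nbd : b ≠ d)
    (hs : Equiv.swap g h = Equiv.swap b c * (Equiv.swap a b * Equiv.swap c d)) : False := by
  have i1 : Equiv.swap g h a = c := by
    rw [hs, Equiv.Perm.mul_apply, Equiv.Perm.mul_apply,
      Equiv.swap_apply_of_ne_of_ne nac nad, Equiv.swap_apply_left,
      Equiv.swap_apply_left]
  have i2 : Equiv.swap g h b = a := by
    rw [hs, Equiv.Perm.mul_apply, Equiv.Perm.mul_apply,
      Equiv.swap_apply_of_ne_of_ne nbc nbd, Equiv.swap_apply_right,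
      Equiv.swap_apply_of_ne_of_ne nab nac]
  have i3 : Equiv.swap g h c = d := by
    rw [hs, Equiv.Perm.mul_apply, Equiv.Perm.mul_apply,
      Equiv.swap_apply_left, Equiv.swap_apply_of_ne_of_ne nad.symm nbd.symm,
      Equiv.swap_apply_of_ne_of_ne nbd.symm ncd.symm]
  exact mixed_kill nab nac nbc (by rw [i1]; exact nac.symm) (by rw [i2]; exact nab)
    (by rw [i3]; exact ncd.symm)

lemma kill_bd {a b c d g h : Fin n} (nab : a ≠ b) (ncd : c ≠ d) (nac : a ≠ c)
    (nad : a ≠ d) (nbc : b ≠ c) (nbd : b ≠ d)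
    (hs : Equiv.swap g h = Equiv.swap b d * (Equiv.swap a b * Equiv.swap c d)) : False := by
  have i1 : Equiv.swap g h a = d := by
    rw [hs, Equiv.Perm.mul_apply, Equiv.Perm.mul_apply,
      Equiv.swap_apply_of_ne_of_ne nac nad, Equiv.swap_apply_left,
      Equiv.swap_apply_left]
  have i2 : Equiv.swap g h b = a := by
    rw [hs, Equiv.Perm.mul_apply, Equiv.Perm.mul_apply,
      Equiv.swap_apply_of_ne_of_ne nbc nbd, Equiv.swap_apply_right,
      Equiv.swap_apply_of_ne_of_ne nab nad]
  have i3 : Equiv.swap g h c = b := by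
    rw [hs, Equiv.Perm.mul_apply, Equiv.Perm.mul_apply,
      Equiv.swap_apply_left, Equiv.swap_apply_of_ne_of_ne nad.symm nbd.symm,
      Equiv.swap_apply_right]
  exact mixed_kill nab nac nbc (by rw [i1]; exact nad.symm) (by rw [i2]; exact nab)
    (by rw [i3]; exact nbc)

end Odd15

open Odd15

theorem stmt15 {n : ℕ} (x y z : Equiv.Perm (Fin n))
    (hxy : bruhatCov x y) (hyz : bruhatCov y z)
    (hy : oddDiagram y = oddDiagram x) (hz : oddDiagram z = oddDiagram x) :
    ∀ u : Equiv.Perm (Fin n), bruhatLE x u → bruhatLE u z →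
      oddDiagram u = oddDiagram x := by
  classical
  have hlxy := hxy.2
  have hlyz := hyz.2
  obtain ⟨a, b, hab, hy1⟩ := cov_step hxy
  subst hy1
  obtain ⟨c, d, hcd, hz1⟩ := cov_step hyz
  subst hz1
  intro u hxu huz
  have hux := le_invLength_of_bruhatLE hxu
  have huz2 := le_invLength_of_bruhatLE huz
  by_cases hu0 : invLength u ≤ invLength x
  · have heq := eq_of_bruhatLE_ge hxu hu0
    rw [← heq]
  · by_cases hu2 : invLength ((x * Equiv.swap a b) * Equiv.swap c d) ≤ invLength u
    · have heq := eq_of_bruhatLE_ge huz hu2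
      rw [heq]
      exact hz
    · have hlu : invLength u = invLength x + 1 := by omega
      obtain ⟨e, f, hef, hu1⟩ := step_of_bruhatLE hxu hlu
      subst hu1
      obtain ⟨g, h, hgh, hz2⟩ := step_of_bruhatLE huz (by omega)
      obtain ⟨hvx, covx⟩ := step_facts hab hlxy
      obtain ⟨hvy, covy⟩ := step_facts hcd hlyz
      obtain ⟨hvu, covu⟩ := step_facts hef hlu
      have Hx := condP_of_oddDiagram_eq (Fin.lt_def.mpr hab) hvx hy
      have Hyc := condP_of_oddDiagram_eq (Fin.lt_def.mpr hcd) hvy (hz.trans hy.symm)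
      refine oddDiagram_swap_eq (Fin.lt_def.mpr hef) hvu ?_
      have hzx1 : Equiv.swap a b * Equiv.swap c d ≠ 1 := by
        intro hone
        have hcontra : (x * Equiv.swap a b) * Equiv.swap c d = x := by
          rw [mul_assoc, hone, mul_one]
        rw [hcontra] at hlyz
        omega
      have hperm : Equiv.swap e f * Equiv.swap g h = Equiv.swap a b * Equiv.swap c d := by
        have h2 := hz2
        rw [mul_assoc, mul_assoc] at h2
        exact (mul_left_cancel h2).symm
      have hnef : e ≠ f := fun hh => by rw [hh] at hef; omega
      have hngh : g ≠ h := fun hh => by rw [hh] at hgh; omega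
      have hne1 : Equiv.swap e f * Equiv.swap g h ≠ 1 := by rw [hperm]; exact hzx1
      have hmvE := prod_swap_moves_left hnef hngh hne1
      have hmvF := prod_swap_moves_right hnef hngh hne1
      rw [hperm] at hmvE hmvF
      have hs2 : Equiv.swap g h = Equiv.swap e f * (Equiv.swap a b * Equiv.swap c d) := by
        rw [← hperm, ← mul_assoc, Equiv.swap_mul_self, one_mul]
      have heM : e = a ∨ e = b ∨ e = c ∨ e = d := by
        by_contra hcon
        push_neg at hcon
        apply hmvE
        rw [Equiv.Perm.mul_apply, Equiv.swap_apply_of_ne_of_ne hcon.2.2.1 hcon.2.2.2,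
          Equiv.swap_apply_of_ne_of_ne hcon.1 hcon.2.1]
      have hfM : f = a ∨ f = b ∨ f = c ∨ f = d := by
        by_contra hcon
        push_neg at hcon
        apply hmvF
        rw [Equiv.Perm.mul_apply, Equiv.swap_apply_of_ne_of_ne hcon.2.2.1 hcon.2.2.2,
          Equiv.swap_apply_of_ne_of_ne hcon.1 hcon.2.1]
      by_cases q1 : a = c
      · by_cases q2 : b = d
        · exfalso
          apply hzx1
          rw [← q1, ← q2]
          exact Equiv.swap_mul_self a b
        · -- case iv : a = c
          subst q1
          rcases heM with he | he | he | he <;> rcases hfM with hf | hf | hf | hf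
          · exact absurd (he.trans hf.symm) hnef
          · rw [he, hf]; exact Hx
          · exact absurd (he.trans hf.symm) hnef
          · rw [he, hf]; exact caseII5 hab hcd q2 hvx Hx Hyc
          · exfalso; rw [he, hf] at hef; omega
          · exact absurd (he.trans hf.symm) hnef
          · exfalso; rw [he, hf] at hef; omega
          · rw [he, hf]; rw [he, hf] at hef; exact caseII6 hab hef hvx Hx Hyc
          · exact absurd (he.trans hf.symm) hnef
          · rw [he, hf]; exact Hx
          · exact absurd (he.trans hf.symm) hnef
          · rw [he, hf]; exact caseII5 hab hcd q2 hvx Hx Hyc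
          · exfalso; rw [he, hf] at hef; omega
          · -- (d, b) : II6r kill
            exfalso
            have nda : d ≠ a := fun hh => by rw [hh] at hcd; omega
            have ndb : d ≠ b := fun hh => q2 hh.symm
            rw [yvA, yvO x nda ndb] at hvy
            rw [he, hf] at hvu
            omega
          · exfalso; rw [he, hf] at hef; omega
          · exact absurd (he.trans hf.symm) hnef
      · by_cases q3 : a = d
        · -- case v : a = d
          subst q3
          rcases heM with he | he | he | he <;> rcases hfM with hf | hf | hf | hf
          · exact absurd (he.trans hf.symm) hnef
          · rw [he, hf]; exact Hx
          · exfalso; rw [he, hf] at hef; omega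
          · exact absurd (he.trans hf.symm) hnef
          · exfalso; rw [he, hf] at hef; omega
          · exact absurd (he.trans hf.symm) hnef
          · exfalso; rw [he, hf] at hef; omega
          · exfalso; rw [he, hf] at hef; omega
          · rw [he, hf]; exact caseII7 hab hcd hvx Hx Hyc
          · rw [he, hf]; exact caseII8 hab hcd hvx Hx Hyc
          · exact absurd (he.trans hf.symm) hnef
          · rw [he, hf]; exact caseII7 hab hcd hvx Hx Hyc
          · exact absurd (he.trans hf.symm) hnef
          · rw [he, hf]; exact Hx
          · exfalso; rw [he, hf] at hef; omega
          · exact absurd (he.trans hf.symm) hnef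
        · by_cases q4 : b = c
          · -- case ii : b = c
            subst q4
            rcases heM with he | he | he | he <;> rcases hfM with hf | hf | hf | hf
            · exact absurd (he.trans hf.symm) hnef
            · rw [he, hf]; exact Hx
            · rw [he, hf]; exact Hx
            · rw [he, hf]; exact caseII2 hab hcd hvx Hx Hyc
            · exfalso; rw [he, hf] at hef; omega
            · exact absurd (he.trans hf.symm) hnef
            · exact absurd (he.trans hf.symm) hnef
            · rw [he, hf]; exact caseII1 hab hcd hvx Hx Hyc
            · exfalso; rw [he, hf] at hef; omega
            · exact absurd (he.trans hf.symm) hnef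
            · exact absurd (he.trans hf.symm) hnef
            · rw [he, hf]; exact caseII1 hab hcd hvx Hx Hyc
            · exfalso; rw [he, hf] at hef; omega
            · exfalso; rw [he, hf] at hef; omega
            · exfalso; rw [he, hf] at hef; omega
            · exact absurd (he.trans hf.symm) hnef
          · by_cases q5 : b = d
            · -- case iii : b = d
              subst q5
              have nca : c ≠ a := fun hh => q1 hh.symm
              have ncb : c ≠ b := fun hh => q4 hh.symm
              rcases heM with he | he | he | he <;> rcases hfM with hf | hf | hf | hf
              · exact absurd (he.trans hf.symm) hnef
              · rw [he, hf]; exact Hx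
              · -- (a, c) : II4r kill
                exfalso
                rw [yvO x nca ncb, yvB] at hvy
                rw [he, hf] at hvu
                omega
              · rw [he, hf]; exact Hx
              · exfalso; rw [he, hf] at hef; omega
              · exact absurd (he.trans hf.symm) hnef
              · exfalso; rw [he, hf] at hef; omega
              · exact absurd (he.trans hf.symm) hnef
              · rw [he, hf]; rw [he, hf] at hef; exact caseII4 hab hef hvx Hx Hyc
              · rw [he, hf]; exact caseII3 hab hcd nca hvx Hx Hyc
              · exact absurd (he.trans hf.symm) hnef
              · rw [he, hf]; exact caseII3 hab hcd nca hvx Hx Hyc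
              · exfalso; rw [he, hf] at hef; omega
              · exact absurd (he.trans hf.symm) hnef
              · exfalso; rw [he, hf] at hef; omega
              · exact absurd (he.trans hf.symm) hnef
            · -- disjoint case
              have nab : a ≠ b := fun hh => by rw [hh] at hab; omega
              have ncd : c ≠ d := fun hh => by rw [hh] at hcd; omega
              rcases heM with he | he | he | he <;> rcases hfM with hf | hf | hf | hf
              · exact absurd (he.trans hf.symm) hnef
              · rw [he, hf]; exact Hx
              · -- (a, c) mixed
                exfalso
                rw [he, hf] at hs2
                exact kill_ac nab ncd q1 q3 q4 q5 hs2
              · -- (a, d) mixed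
                exfalso
                rw [he, hf] at hs2
                exact kill_ad nab ncd q1 q3 q4 q5 hs2
              · exfalso; rw [he, hf] at hef; omega
              · exact absurd (he.trans hf.symm) hnef
              · -- (b, c) mixed
                exfalso
                rw [he, hf] at hs2
                exact kill_bc nab ncd q1 q3 q4 q5 hs2
              · -- (b, d) mixed
                exfalso
                rw [he, hf] at hs2
                exact kill_bd nab ncd q1 q3 q4 q5 hs2
              · -- (c, a) mixed
                exfalso
                rw [he, hf] at hs2
                rw [Equiv.swap_comm c a] at hs2
                exact kill_ac nab ncd q1 q3 q4 q5 hs2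
              · -- (c, b) mixed
                exfalso
                rw [he, hf] at hs2
                rw [Equiv.swap_comm c b] at hs2
                exact kill_bc nab ncd q1 q3 q4 q5 hs2
              · exact absurd (he.trans hf.symm) hnef
              · -- (c, d) : caseI
                rw [he, hf]
                rw [he, hf] at hvu covu
                exact caseI hab hcd q1 q3 q4 q5 hvx hvu Hx Hyc covx covu
              · -- (d, a) mixed
                exfalso
                rw [he, hf] at hs2
                rw [Equiv.swap_comm d a] at hs2
                exact kill_ad nab ncd q1 q3 q4 q5 hs2
              · -- (d, b) mixed
                exfalso
                rw [he, hf] at hs2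
                rw [Equiv.swap_comm d b] at hs2
                exact kill_bd nab ncd q1 q3 q4 q5 hs2
              · -- (d, c) : wrong orientation
                exfalso; rw [he, hf] at hef; omega
              · exact absurd (he.trans hf.symm) hnef
end

section
/- Every odd diagram class in S_n is an antichain in the right weak order: if u ≠ v have D_o(u) = D_o(v), then u and v are incomparable in right weak order. -/
def rightWeakLE {n : ℕ} : Equiv.Perm (Fin n) → Equiv.Perm (Fin n) → Prop :=
  Relation.ReflTransGen (fun u v => ∃ (i : Fin n) (h : (i : ℕ) + 1 < n),
    v = u * Equiv.swap i ⟨(i : ℕ) + 1, h⟩ ∧ invLength u < invLength v)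

-- containment of (value) inversion sets
def myCont {n : ℕ} (u v : Equiv.Perm (Fin n)) : Prop :=
  ∀ a b : Fin n, (a : ℕ) < (b : ℕ) → (u.symm b : ℕ) < (u.symm a : ℕ) →
    (v.symm b : ℕ) < (v.symm a : ℕ)

lemma myCont_refl {n : ℕ} (u : Equiv.Perm (Fin n)) : myCont u u := fun _ _ _ h => h

lemma myCont_trans {n : ℕ} {u v w : Equiv.Perm (Fin n)} (h1 : myCont u v) (h2 : myCont v w) :
    myCont u w := fun a b hab h => h2 a b hab (h1 a b hab h)

lemma core_lemma {n : ℕ} (u v : Equiv.Perm (Fin n)) (hI : myCont u v)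
    (hD : oddDiagram u = oddDiagram v) : u = v := by
  have key : ∀ m : ℕ, ∀ c : Fin n, (c : ℕ) = m → u.symm c = v.symm c := by
    intro m
    induction m using Nat.strong_induction_on with
    | _ m IH =>
    intro c hc
    subst hc
    -- IH restated
    have IH' : ∀ d : Fin n, (d : ℕ) < (c : ℕ) → u.symm d = v.symm d := by
      intro d hd; exact IH _ hd d rfl
    have hsmallu : ∀ p : Fin n, (u p : ℕ) < (c : ℕ) → v p = u p := by
      intro p hp
      have h1 : u.symm (u p) = v.symm (u p) := IH' _ hp
      have h2 : v.symm (u p) = p := by rw [← h1]; simp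
      have := congrArg v h2
      simpa using this.symm
    have hsmallv : ∀ p : Fin n, (v p : ℕ) < (c : ℕ) → u p = v p := by
      intro p hp
      have h1 : u.symm (v p) = v.symm (v p) := IH' _ hp
      have h2 : u.symm (v p) = p := by rw [h1]; simp
      have := congrArg u h2
      simpa using this.symm
    set q : Fin n := u.symm c with hq
    set q' : Fin n := v.symm c with hq'
    have huq : u q = c := by simp [hq]
    have hvq' : v q' = c := by simp [hq']
    rcases lt_trichotomy (q : ℕ) (q' : ℕ) with hlt | heq | hgt
    · -- q < q' : find a cell in Do(v) not in Do(u)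
      exfalso
      by_cases hpar : (q : ℕ) % 2 = (q' : ℕ) % 2
      · -- same parity; use p* = q+1
        have hq2 : (q : ℕ) + 1 < (q' : ℕ) := by omega
        have hn : (q : ℕ) + 1 < n := lt_trans hq2 q'.isLt
        set p : Fin n := ⟨(q : ℕ) + 1, hn⟩ with hp
        have hpq' : p ≠ q' := by
          intro hcontr
          have : (p : ℕ) = (q' : ℕ) := congrArg Fin.val hcontr
          simp [hp] at this; omega
        have hcv : (c : ℕ) < (v p : ℕ) := by
          rcases lt_trichotomy ((v p : ℕ)) ((c : ℕ)) with h1 | h1 | h1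
          · exfalso
            have hup : u p = v p := hsmallv p h1
            -- pair (v p, c): position of c in u is q < p, so inverted in u
            have hIa := hI (v p) c h1
            have hx : (u.symm c : ℕ) < (u.symm (v p) : ℕ) := by
              rw [← hup, Equiv.symm_apply_apply, ← hq]
              simp [hp]
            have := hIa hx
            rw [← hq'] at this
            -- v.symm (v p) = p
            simp at this
            have h3 : (v.symm c : ℕ) < (v.symm (v p) : ℕ) := hIa hx
            rw [Equiv.symm_apply_apply] at h3
            have h4 : (p : ℕ) = (q : ℕ) + 1 := rfl
            have h5 : (q' : ℕ) = (v.symm c : ℕ) := rfl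
            omega
          · exfalso
            have : v p = c := Fin.ext h1
            have : p = q' := by
              have := congrArg v.symm this
              simpa [hq'] using this
            exact hpq' this
          · exact h1
        have hcell : (p, c) ∈ oddDiagram v := by
          simp only [oddDiagram, Finset.mem_filter, Finset.mem_univ, true_and]
          refine ⟨hcv, ?_, ?_⟩
          · rw [← hq']; simpa [hp] using hq2
          · rw [← hq']; simp [hp]; omega
        rw [← hD] at hcell
        simp only [oddDiagram, Finset.mem_filter, Finset.mem_univ, true_and] at hcell
        have := hcell.2.1
        rw [← hq] at this
        simp [hp] at this
      · -- different parity; use p* = q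
        have hcv : (c : ℕ) < (v q : ℕ) := by
          rcases lt_trichotomy ((v q : ℕ)) ((c : ℕ)) with h1 | h1 | h1
          · exfalso
            have huq2 : u q = v q := hsmallv q h1
            rw [huq] at huq2; omega
          · exfalso
            have : v q = c := Fin.ext h1
            have hqq' : q = q' := by
              have := congrArg v.symm this
              simpa [hq'] using this
            rw [hqq'] at hlt; omega
          · exact h1
        have hcell : (q, c) ∈ oddDiagram v := by
          simp only [oddDiagram, Finset.mem_filter, Finset.mem_univ, true_and]
          exact ⟨hcv, by rw [← hq']; exact hlt, by rw [← hq']; exact hpar⟩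
        rw [← hD] at hcell
        simp only [oddDiagram, Finset.mem_filter, Finset.mem_univ, true_and] at hcell
        have := hcell.2.1
        rw [← hq] at this
        omega
    · exact Fin.ext heq
    · -- q' < q : pigeonhole
      exfalso
      set X : Finset (Fin n) := Finset.univ.filter (fun p => (p : ℕ) < (q : ℕ)) with hX
      have hmaps : ∀ p ∈ X, v.symm (u p) ∈ X := by
        intro p hpX
        simp only [hX, Finset.mem_filter, Finset.mem_univ, true_and] at hpX ⊢
        rcases lt_trichotomy ((u p : ℕ)) ((c : ℕ)) with h1 | h1 | h1
        · have := IH' (u p) h1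
          rw [← this]; simpa using hpX
        · exfalso
          have : u p = c := Fin.ext h1
          have : p = q := by
            have := congrArg u.symm this
            simpa [hq] using this
          rw [this] at hpX; omega
        · have hIa := hI c (u p) h1
          have hx : (u.symm (u p) : ℕ) < (u.symm c : ℕ) := by simpa [← hq] using hpX
          have := hIa hx
          rw [← hq'] at this
          omega
      have hinj : Set.InjOn (fun p => v.symm (u p)) X := by
        intro a _ b _ hab
        simp only at hab
        exact u.injective (v.symm.injective hab)
      have himg : X.image (fun p => v.symm (u p)) = X := by
        apply Finset.eq_of_subset_of_card_le
        · intro x hx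
          rcases Finset.mem_image.mp hx with ⟨p, hp, rfl⟩
          exact hmaps p hp
        · rw [Finset.card_image_of_injOn hinj]
      have hq'X : q' ∈ X := by
        simp only [hX, Finset.mem_filter, Finset.mem_univ, true_and]; exact hgt
      rw [← himg] at hq'X
      rcases Finset.mem_image.mp hq'X with ⟨p, hpX, hpq'⟩
      have : u p = c := by
        have := congrArg v hpq'
        simpa [hvq'] using this
      have : p = q := by
        have := congrArg u.symm this
        simpa [hq] using this
      rw [this] at hpX
      simp only [hX, Finset.mem_filter, Finset.mem_univ, true_and] at hpX
      omega
  have hs : u.symm = v.symm := by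
    ext c
    exact congrArg Fin.val (key (c : ℕ) c rfl)
  have := congrArg Equiv.symm hs
  simpa using this

-- swap of adjacent positions preserves strict order except on the pair itself
lemma swap_lt_swap {n : ℕ} {i j k m : Fin n} (hij : (j : ℕ) = (i : ℕ) + 1)
    (hkm : k < m) (hex : ¬(k = i ∧ m = j)) :
    Equiv.swap i j k < Equiv.swap i j m := by
  have hkm' : (k : ℕ) < (m : ℕ) := hkm
  rw [Fin.lt_def]
  rcases eq_or_ne k i with hki | hki
  · rcases eq_or_ne m j with hmj | hmj
    · exact absurd ⟨hki, hmj⟩ hex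
    · have hmi : m ≠ i := by
        intro hc; rw [hc, hki] at hkm'; omega
      rw [hki, Equiv.swap_apply_left, Equiv.swap_apply_of_ne_of_ne hmi hmj]
      have : (m : ℕ) ≠ (j : ℕ) := fun hc => hmj (Fin.ext hc)
      rw [hki] at hkm'
      omega
  · rcases eq_or_ne k j with hkj | hkj
    · have hmi : m ≠ i := by
        intro hc; rw [hc] at hkm'; rw [hkj] at hkm'; omega
      have hmj : m ≠ j := by
        intro hc; rw [hc] at hkm'; omega
      rw [hkj, Equiv.swap_apply_right, Equiv.swap_apply_of_ne_of_ne hmi hmj]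
      rw [hkj] at hkm'
      omega
    · rw [Equiv.swap_apply_of_ne_of_ne hki hkj]
      rcases eq_or_ne m i with hmi | hmi
      · rw [hmi, Equiv.swap_apply_left]
        have : (k : ℕ) ≠ (i : ℕ) := fun hc => hki (Fin.ext hc)
        rw [hmi] at hkm'
        omega
      · rcases eq_or_ne m j with hmj | hmj
        · rw [hmj, Equiv.swap_apply_right]
          have hki' : (k : ℕ) ≠ (i : ℕ) := fun hc => hki (Fin.ext hc)
          rw [hmj] at hkm'
          omega
        · rw [Equiv.swap_apply_of_ne_of_ne hmi hmj]
          exact hkm'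

lemma cover_ascent {n : ℕ} (u : Equiv.Perm (Fin n)) (i : Fin n) (h : (i : ℕ) + 1 < n)
    (hlen : invLength u < invLength (u * Equiv.swap i ⟨(i : ℕ) + 1, h⟩)) :
    u i < u ⟨(i : ℕ) + 1, h⟩ := by
  set j : Fin n := ⟨(i : ℕ) + 1, h⟩ with hj
  have hij : i ≠ j := by
    intro hc
    have := congrArg Fin.val hc
    simp [hj] at this
  by_contra hcon
  push_neg at hcon
  have hne : u j ≠ u i := fun hc => hij (u.injective hc).symm
  have hji : u j < u i := lt_of_le_of_ne hcon hne
  -- build injection Inv(u*s) -> Inv(u)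
  have hle : invLength (u * Equiv.swap i j) ≤ invLength u := by
    apply Finset.card_le_card_of_injOn
      (fun p : Fin n × Fin n => (Equiv.swap i j p.1, Equiv.swap i j p.2))
    · intro p (hp : p ∈ Finset.univ.filter (fun p : Fin n × Fin n => p.1 < p.2 ∧ (u * Equiv.swap i j) p.2 < (u * Equiv.swap i j) p.1))
      show (Equiv.swap i j p.1, Equiv.swap i j p.2) ∈ Finset.univ.filter (fun p : Fin n × Fin n => p.1 < p.2 ∧ u p.2 < u p.1)
      replace hp := (Finset.mem_filter.mp hp).2
      simp only [Equiv.Perm.mul_apply] at hp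
      refine Finset.mem_filter.mpr ⟨Finset.mem_univ _, ?_⟩
      obtain ⟨h1, h2⟩ := hp
      have hex : ¬(p.1 = i ∧ p.2 = j) := by
        rintro ⟨e1, e2⟩
        rw [e1, e2] at h2
        rw [Equiv.swap_apply_left, Equiv.swap_apply_right] at h2
        exact absurd h2 (not_lt.mpr (le_of_lt hji))
      exact ⟨swap_lt_swap (by simp [hj]) h1 hex, h2⟩
    · intro a _ b _ hab
      simp only [Prod.mk.injEq] at hab
      exact Prod.ext ((Equiv.swap i j).injective hab.1) ((Equiv.swap i j).injective hab.2)
  omega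

lemma cover_cont {n : ℕ} (u : Equiv.Perm (Fin n)) (i : Fin n) (h : (i : ℕ) + 1 < n)
    (hlen : invLength u < invLength (u * Equiv.swap i ⟨(i : ℕ) + 1, h⟩)) :
    myCont u (u * Equiv.swap i ⟨(i : ℕ) + 1, h⟩) := by
  set j : Fin n := ⟨(i : ℕ) + 1, h⟩ with hj
  have hasc : u i < u j := cover_ascent u i h hlen
  intro a b hab hpos
  have hsymm : ∀ x : Fin n, (u * Equiv.swap i j).symm x = Equiv.swap i j (u.symm x) := by
    intro x
    rw [Equiv.symm_apply_eq]
    simp [Equiv.Perm.mul_apply]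
  rw [hsymm, hsymm]
  have hex : ¬(u.symm b = i ∧ u.symm a = j) := by
    rintro ⟨e1, e2⟩
    have hb : u i = b := by rw [← e1]; simp
    have ha : u j = a := by rw [← e2]; simp
    rw [hb, ha] at hasc
    exact absurd hab (not_lt.mpr (le_of_lt hasc))
  exact swap_lt_swap (by simp [hj]) (Fin.lt_def.mpr hpos) hex

lemma rwle_cont {n : ℕ} {u v : Equiv.Perm (Fin n)} (hle : rightWeakLE u v) :
    myCont u v := by
  induction hle with
  | refl => exact fun _ _ _ h => h
  | tail _ hstep ih =>
    obtain ⟨i, hi, rfl, hlen⟩ := hstep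
    exact fun a b hab hp => cover_cont _ i hi hlen a b hab (ih a b hab hp)

theorem stmt17 {n : ℕ} (u v : Equiv.Perm (Fin n)) (hne : u ≠ v)
    (h : oddDiagram u = oddDiagram v) :
    ¬ rightWeakLE u v ∧ ¬ rightWeakLE v u := by
  constructor
  · intro hle
    exact hne (core_lemma u v (rwle_cont hle) h)
  · intro hle
    exact hne (core_lemma v u (rwle_cont hle) h.symm).symm
end

section
/- If a transposition (i j) with i < j is legal for v (i.e., D_o(v·(i j)) = D_o(v) with v ≠ v·(i j)), then j ≥ i + 2 and v(j-1) < min{v(i), v(j)}. -/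
theorem stmt18 {n : ℕ} (v : Equiv.Perm (Fin n)) (i j : Fin n) (hij : i < j)
    (h : oddDiagram (v * Equiv.swap i j) = oddDiagram v) :
    (i : ℕ) + 2 ≤ (j : ℕ) ∧
      ∀ h' : Fin n, (h' : ℕ) + 1 = (j : ℕ) → v h' < min (v i) (v j) := by
  have hw : ∀ (w : Equiv.Perm (Fin n)) (p : Fin n × Fin n),
      p ∈ oddDiagram w ↔ ((p.2 : ℕ) < (w p.1 : ℕ) ∧ (p.1 : ℕ) < (w.symm p.2 : ℕ) ∧
        (p.1 : ℕ) % 2 ≠ (w.symm p.2 : ℕ) % 2) := by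
    intro w p; simp [oddDiagram]
  set w := v * Equiv.swap i j with hwdef
  have hij' : (i : ℕ) < (j : ℕ) := hij
  have hne : i ≠ j := ne_of_lt hij
  have hwi : w i = v j := by simp [hwdef, Equiv.swap_apply_left]
  have hwj : w j = v i := by simp [hwdef, Equiv.swap_apply_right]
  have hsymm_vj : w.symm (v j) = i := by rw [← hwi]; simp
  have hsymm_vi : w.symm (v i) = j := by rw [← hwj]; simp
  have hvij : v i ≠ v j := fun e => hne (v.injective e)
  have h1 : (i : ℕ) + 2 ≤ (j : ℕ) := by
    by_contra hcon
    have hj1 : (j : ℕ) = (i : ℕ) + 1 := by omega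
    have hpar : (i : ℕ) % 2 ≠ (j : ℕ) % 2 := by omega
    rcases lt_or_gt_of_ne hvij with hlt | hgt
    · have hmem : (i, v i) ∈ oddDiagram w := by
        rw [hw]
        refine ⟨?_, ?_, ?_⟩
        · simpa [hwi] using (Fin.lt_def.mp hlt)
        · simpa [hsymm_vi] using hij'
        · simpa [hsymm_vi] using hpar
      rw [h, hw] at hmem
      exact absurd hmem.1 (lt_irrefl _)
    · have hmem : (i, v j) ∈ oddDiagram v := by
        rw [hw]
        refine ⟨?_, ?_, ?_⟩
        · exact Fin.lt_def.mp hgt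
        · simpa using hij'
        · simpa using hpar
      rw [← h, hw] at hmem
      have : (v j : ℕ) < (w i : ℕ) := hmem.1
      rw [hwi] at this
      exact absurd this (lt_irrefl _)
  refine ⟨h1, ?_⟩
  intro h' hh'
  have hih' : (i : ℕ) < (h' : ℕ) := by omega
  have hh'j : (h' : ℕ) < (j : ℕ) := by omega
  have hpar : (h' : ℕ) % 2 ≠ (j : ℕ) % 2 := by omega
  have hni : h' ≠ i := Fin.ne_of_val_ne (by omega)
  have hnj : h' ≠ j := Fin.ne_of_val_ne (by omega)
  have hwh : w h' = v h' := by
    simp [hwdef, Equiv.swap_apply_of_ne_of_ne hni hnj]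
  have hvjh : v j ≠ v h' := fun e => hnj (v.injective e).symm
  have hvih : v i ≠ v h' := fun e => hni (v.injective e).symm
  have hlt1 : v h' < v j := by
    by_contra hcon
    have hgt : v j < v h' := lt_of_le_of_ne (not_lt.mp hcon) hvjh
    have hmem : (h', v j) ∈ oddDiagram v := by
      rw [hw]
      refine ⟨Fin.lt_def.mp hgt, ?_, ?_⟩
      · simpa using hh'j
      · simpa using hpar
    rw [← h, hw] at hmem
    have : (h' : ℕ) < (w.symm (v j) : ℕ) := hmem.2.1
    rw [hsymm_vj] at this
    omega
  have hlt2 : v h' < v i := by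
    by_contra hcon
    have hgt : v i < v h' := lt_of_le_of_ne (not_lt.mp hcon) hvih
    have hmem : (h', v i) ∈ oddDiagram w := by
      rw [hw]
      refine ⟨?_, ?_, ?_⟩
      · rw [hwh]; exact Fin.lt_def.mp hgt
      · rw [hsymm_vi]; exact hh'j
      · rw [hsymm_vi]; exact hpar
    rw [h, hw] at hmem
    have : (h' : ℕ) < (v.symm (v i) : ℕ) := hmem.2.1
    simp at this
    omega
  exact lt_min hlt2 hlt1
end
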